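/- arXiv:2212.13728 — 5 statements merged into one kernel-verified Lean document; each statement's English description precedes it below -/
import Mathlib

section
/- For every σ ∈ (0,1] there exists κ ∈ (0,1] such that the following holds for every field F, every n ∈ ℕ, and every matrix A ∈ F^{n×n}: if I ⊆ [n] is a random subset containing each element independently with probability σ, then with probability at least 1 − 2e^{−κ·rank(A)} the principal submatrix A_{|I×I} (the submatrix of A induced by the rows and columns indexed by I) has rank at least κ·rank(A). -/
open Classical in
/-- The probability, under the distribution on subsets of `Fin n` where each element is
included independently with probability `σ`, of the event `E`. -/
noncomputable def subsetPr (n : ℕ) (σ : ℝ) (E : Finset (Fin n) → Prop) : ℝ :=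
  ∑ I : Finset (Fin n), if E I then σ ^ I.card * (1 - σ) ^ (n - I.card) else 0

/-- The principal submatrix of `A` induced by the rows and columns indexed by `I`. -/
def principalSubmatrix {F : Type*} {n : ℕ} (A : Matrix (Fin n) (Fin n) F)
    (I : Finset (Fin n)) : Matrix I I F :=
  A.submatrix (fun i : I => (i : Fin n)) (fun j : I => (j : Fin n))


open Finset Classical
set_option linter.unusedSectionVars false

namespace RRM

noncomputable def ind (P : Prop) : ℝ := if P then 1 else 0

lemma ind_nonneg (P : Prop) : 0 ≤ ind P := by
  unfold ind; split <;> norm_num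

lemma ind_le_one (P : Prop) : ind P ≤ 1 := by
  unfold ind; split <;> norm_num

lemma ind_le_ind {P Q : Prop} (h : P → Q) : ind P ≤ ind Q := by
  unfold ind; split
  · simp [if_pos (h (by assumption))]
  · exact ind_nonneg Q

lemma ind_add_ind_not (P : Prop) : ind P + ind (¬ P) = 1 := by
  unfold ind; by_cases h : P <;> simp [h]

variable {α : Type*} [DecidableEq α]

noncomputable def w (τ : ℝ) (s I : Finset α) : ℝ := τ ^ I.card * (1 - τ) ^ (s.card - I.card)

lemma w_nonneg {τ : ℝ} (h0 : 0 ≤ τ) (h1 : τ ≤ 1) (s I : Finset α) : 0 ≤ w τ s I := by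
  have h2 : (0:ℝ) ≤ 1 - τ := by linarith
  exact mul_nonneg (pow_nonneg h0 _) (pow_nonneg h2 _)

lemma w_insert_left {τ : ℝ} {s I : Finset α} {a : α} (ha : a ∉ s) (hI : I ⊆ s) :
    w τ (insert a s) (insert a I) = τ * w τ s I := by
  have haI : a ∉ I := fun h => ha (hI h)
  have hc : I.card ≤ s.card := card_le_card hI
  unfold w
  rw [card_insert_of_notMem ha, card_insert_of_notMem haI]
  have : s.card + 1 - (I.card + 1) = s.card - I.card := by omega
  rw [this, pow_succ]
  ring

lemma w_insert_right {τ : ℝ} {s I : Finset α} {a : α} (ha : a ∉ s) (hI : I ⊆ s) :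
    w τ (insert a s) I = (1 - τ) * w τ s I := by
  have hc : I.card ≤ s.card := card_le_card hI
  unfold w
  rw [card_insert_of_notMem ha]
  have : s.card + 1 - I.card = (s.card - I.card) + 1 := by omega
  rw [this, pow_succ]
  ring

/-- Generating function / moment computation. -/
lemma sum_w_pow (τ x : ℝ) (s C : Finset α) :
    ∑ I ∈ s.powerset, w τ s I * x ^ (I ∩ C).card = (τ * x + (1 - τ)) ^ (s ∩ C).card := by
  induction s using Finset.induction_on with
  | empty => simp [w]
  | insert a s ha ih =>
    rw [Finset.sum_powerset_insert ha]
    have h1 : ∀ I ∈ s.powerset, w τ (insert a s) I * x ^ (I ∩ C).card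
        = (1 - τ) * (w τ s I * x ^ (I ∩ C).card) := by
      intro I hI
      rw [w_insert_right ha (mem_powerset.mp hI)]; ring
    by_cases haC : a ∈ C
    · have h2 : ∀ I ∈ s.powerset, w τ (insert a s) (insert a I) * x ^ (insert a I ∩ C).card
          = (τ * x) * (w τ s I * x ^ (I ∩ C).card) := by
        intro I hI
        have hIs := mem_powerset.mp hI
        have haI : a ∉ I ∩ C := by
          simp only [mem_inter, not_and]
          intro h; exact absurd (hIs h) ha
        rw [w_insert_left ha hIs, insert_inter_of_mem haC, card_insert_of_notMem haI,
          pow_succ]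
        ring
      rw [Finset.sum_congr rfl h1, Finset.sum_congr rfl h2, ← Finset.mul_sum, ← Finset.mul_sum,
        ih]
      have haSC : a ∉ s ∩ C := by simp [ha]
      rw [insert_inter_of_mem haC, card_insert_of_notMem haSC, pow_succ]
      ring
    · have h2 : ∀ I ∈ s.powerset, w τ (insert a s) (insert a I) * x ^ (insert a I ∩ C).card
          = τ * (w τ s I * x ^ (I ∩ C).card) := by
        intro I hI
        rw [w_insert_left ha (mem_powerset.mp hI), insert_inter_of_notMem haC]
        ring
      rw [Finset.sum_congr rfl h1, Finset.sum_congr rfl h2, ← Finset.mul_sum, ← Finset.mul_sum,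
        ih, insert_inter_of_notMem haC]
      ring

lemma sum_w (τ : ℝ) (s : Finset α) : ∑ I ∈ s.powerset, w τ s I = 1 := by
  have := sum_w_pow τ 1 s (∅ : Finset α)
  simpa using this


/-- Chernoff-type tail bound, raw form. -/
lemma sum_w_ind_lt_le (τ : ℝ) (hτ0 : 0 ≤ τ) (hτ1 : τ ≤ 1) (s C : Finset α) (hC : C ⊆ s)
    (a : ℝ) :
    ∑ I ∈ s.powerset, w τ s I * ind (((I ∩ C).card : ℝ) < a)
      ≤ (2:ℝ) ^ a * (1 - τ/2) ^ C.card := by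
  have key : ∀ I ∈ s.powerset, w τ s I * ind (((I ∩ C).card : ℝ) < a)
      ≤ (2:ℝ) ^ a * (w τ s I * (1/2 : ℝ) ^ (I ∩ C).card) := by
    intro I _
    have hw := w_nonneg hτ0 hτ1 s I
    by_cases h : ((I ∩ C).card : ℝ) < a
    · have h1 : (1:ℝ) ≤ (2:ℝ) ^ a * (1/2 : ℝ) ^ (I ∩ C).card := by
        have e1 : ((1/2 : ℝ)) ^ (I ∩ C).card = (2:ℝ) ^ (-((I ∩ C).card : ℝ)) := by
          rw [Real.rpow_neg (by norm_num), Real.rpow_natCast, one_div, inv_pow]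
        rw [e1, ← Real.rpow_add (by norm_num)]
        apply Real.one_le_rpow (by norm_num)
        linarith
      calc w τ s I * ind (((I ∩ C).card : ℝ) < a) = w τ s I := by
            unfold ind; rw [if_pos h, mul_one]
        _ ≤ (2:ℝ) ^ a * (1/2 : ℝ) ^ (I ∩ C).card * w τ s I := by
            nlinarith
        _ = (2:ℝ) ^ a * (w τ s I * (1/2 : ℝ) ^ (I ∩ C).card) := by ring
    · unfold ind
      rw [if_neg h, mul_zero]
      positivity
  calc ∑ I ∈ s.powerset, w τ s I * ind (((I ∩ C).card : ℝ) < a)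
      ≤ ∑ I ∈ s.powerset, (2:ℝ) ^ a * (w τ s I * (1/2 : ℝ) ^ (I ∩ C).card) :=
        Finset.sum_le_sum key
    _ = (2:ℝ) ^ a * ∑ I ∈ s.powerset, w τ s I * (1/2 : ℝ) ^ (I ∩ C).card := by
        rw [Finset.mul_sum]
    _ = (2:ℝ) ^ a * (τ * (1/2) + (1 - τ)) ^ (s ∩ C).card := by rw [sum_w_pow]
    _ = (2:ℝ) ^ a * (1 - τ/2) ^ C.card := by
        rw [Finset.inter_eq_right.mpr hC]; ring_nf

/-- Chernoff tail bound in exponential form. -/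
lemma tail_bound (τ : ℝ) (hτ0 : 0 ≤ τ) (hτ1 : τ ≤ 1) (s C : Finset α) (hC : C ⊆ s)
    (a : ℝ) (ha0 : 0 ≤ a) (ha : a ≤ τ * C.card / 2) :
    ∑ I ∈ s.powerset, w τ s I * ind (((I ∩ C).card : ℝ) < a)
      ≤ Real.exp (-(0.15 * τ * C.card)) := by
  refine le_trans (sum_w_ind_lt_le τ hτ0 hτ1 s C hC a) ?_
  set m : ℝ := (C.card : ℝ) with hm
  have hm0 : 0 ≤ m := Nat.cast_nonneg _
  have h2a : (2:ℝ) ^ a ≤ Real.exp (Real.log 2 * (τ * m / 2)) := by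
    rw [Real.rpow_def_of_pos (by norm_num : (0:ℝ) < 2) a]
    apply Real.exp_le_exp.mpr
    have hlog2 : (0:ℝ) ≤ Real.log 2 := Real.log_nonneg (by norm_num)
    nlinarith
  have hpow : (1 - τ/2) ^ C.card ≤ Real.exp (-(τ/2)) ^ C.card := by
    apply pow_le_pow_left₀ (by linarith)
    linarith [Real.add_one_le_exp (-(τ/2))]
  have hpow2 : (Real.exp (-(τ/2))) ^ C.card = Real.exp (-(τ/2) * m) := by
    rw [← Real.exp_nat_mul, hm]; ring_nf
  have hb : (2:ℝ) ^ a * (1 - τ/2) ^ C.card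
      ≤ Real.exp (Real.log 2 * (τ * m / 2) + (-(τ/2) * m)) := by
    rw [Real.exp_add]
    have h1 : (0:ℝ) ≤ (1 - τ/2) ^ C.card := pow_nonneg (by linarith) _
    have h2 : (0:ℝ) ≤ (2:ℝ) ^ a := (Real.rpow_pos_of_pos (by norm_num) a).le
    calc (2:ℝ) ^ a * (1 - τ/2) ^ C.card
        ≤ Real.exp (Real.log 2 * (τ * m / 2)) * (1 - τ/2) ^ C.card := by
          exact mul_le_mul_of_nonneg_right h2a h1
      _ ≤ Real.exp (Real.log 2 * (τ * m / 2)) * Real.exp (-(τ/2) * m) := by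
          apply mul_le_mul_of_nonneg_left _ (Real.exp_nonneg _)
          rw [← hpow2]; exact hpow
  refine hb.trans (Real.exp_le_exp.mpr ?_)
  have hlog : Real.log 2 ≤ 0.7 := by
    have := Real.log_two_lt_d9
    linarith
  nlinarith [mul_nonneg (mul_nonneg hτ0 hm0) (sub_nonneg.mpr hlog)]

lemma sum_w_ind_ge (τ : ℝ) (hτ0 : 0 ≤ τ) (hτ1 : τ ≤ 1) (s C : Finset α) (hC : C ⊆ s)
    (a : ℝ) (ha0 : 0 ≤ a) (ha : a ≤ τ * C.card / 2) :
    1 - Real.exp (-(0.15 * τ * C.card))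
      ≤ ∑ I ∈ s.powerset, w τ s I * ind (a ≤ ((I ∩ C).card : ℝ)) := by
  have hsplit : ∀ I : Finset α, w τ s I * ind (a ≤ ((I ∩ C).card : ℝ))
      = w τ s I - w τ s I * ind (((I ∩ C).card : ℝ) < a) := by
    intro I
    have : ind (a ≤ ((I ∩ C).card : ℝ)) = 1 - ind (((I ∩ C).card : ℝ) < a) := by
      unfold ind
      by_cases h : a ≤ ((I ∩ C).card : ℝ)
      · rw [if_pos h, if_neg (not_lt.mpr h)]; norm_num
      · rw [if_neg h, if_pos (not_le.mp h)]; norm_num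
    rw [this]; ring
  calc 1 - Real.exp (-(0.15 * τ * C.card))
      ≤ 1 - ∑ I ∈ s.powerset, w τ s I * ind (((I ∩ C).card : ℝ) < a) := by
        linarith [tail_bound τ hτ0 hτ1 s C hC a ha0 ha]
    _ = ∑ I ∈ s.powerset, (w τ s I - w τ s I * ind (((I ∩ C).card : ℝ) < a)) := by
        rw [Finset.sum_sub_distrib, sum_w]
    _ = ∑ I ∈ s.powerset, w τ s I * ind (a ≤ ((I ∩ C).card : ℝ)) := by
        exact (Finset.sum_congr rfl fun I _ => (hsplit I)).symm


/-- Decoupling: a `σ`-random set, `σ = 1-(1-τ)²`, is the union of two independent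
`τ`-random sets. -/
lemma decouple (τ : ℝ) (s : Finset α) :
    ∀ h : Finset α → ℝ,
      ∑ I ∈ s.powerset, w (1 - (1-τ)^2) s I * h I
        = ∑ I1 ∈ s.powerset, ∑ I2 ∈ s.powerset, w τ s I1 * w τ s I2 * h (I1 ∪ I2) := by
  induction s using Finset.induction_on with
  | empty => intro h; simp [w]
  | insert a s ha ih =>
    intro h
    have hw1 : ∀ I ∈ s.powerset, ∀ (τ' : ℝ),
        w τ' (insert a s) I = (1 - τ') * w τ' s I := fun I hI τ' =>
      w_insert_right ha (mem_powerset.mp hI)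
    have hw2 : ∀ I ∈ s.powerset, ∀ (τ' : ℝ),
        w τ' (insert a s) (insert a I) = τ' * w τ' s I := fun I hI τ' =>
      w_insert_left ha (mem_powerset.mp hI)
    rw [Finset.sum_powerset_insert ha]
    have lhs1 : ∑ I ∈ s.powerset, w (1 - (1-τ)^2) (insert a s) I * h I
        = (1-τ)^2 * ∑ I ∈ s.powerset, w (1 - (1-τ)^2) s I * h I := by
      rw [Finset.mul_sum]
      refine Finset.sum_congr rfl fun I hI => ?_
      rw [hw1 I hI]; ring
    have lhs2 : ∑ I ∈ s.powerset, w (1 - (1-τ)^2) (insert a s) (insert a I) * h (insert a I)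
        = (1 - (1-τ)^2) * ∑ I ∈ s.powerset, w (1 - (1-τ)^2) s I * h (insert a I) := by
      rw [Finset.mul_sum]
      refine Finset.sum_congr rfl fun I hI => ?_
      rw [hw2 I hI]; ring
    rw [lhs1, lhs2, ih h, ih (fun t => h (insert a t))]
    -- now expand the RHS
    rw [Finset.sum_powerset_insert ha]
    have rhs1 : ∑ I1 ∈ s.powerset, ∑ I2 ∈ (insert a s).powerset,
          w τ (insert a s) I1 * w τ (insert a s) I2 * h (I1 ∪ I2)
        = ∑ I1 ∈ s.powerset, ∑ I2 ∈ s.powerset,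
            ((1-τ) * (1-τ) * (w τ s I1 * w τ s I2 * h (I1 ∪ I2))
              + (1-τ) * τ * (w τ s I1 * w τ s I2 * h (insert a (I1 ∪ I2)))) := by
      refine Finset.sum_congr rfl fun I1 hI1 => ?_
      rw [Finset.sum_powerset_insert ha, ← Finset.sum_add_distrib]
      refine Finset.sum_congr rfl fun I2 hI2 => ?_
      rw [hw1 I1 hI1, hw1 I2 hI2, hw2 I2 hI2, Finset.union_insert]
      ring
    have rhs2 : ∑ I1 ∈ s.powerset, ∑ I2 ∈ (insert a s).powerset,
          w τ (insert a s) (insert a I1) * w τ (insert a s) I2 * h (insert a I1 ∪ I2)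
        = ∑ I1 ∈ s.powerset, ∑ I2 ∈ s.powerset,
            (τ * (1-τ) * (w τ s I1 * w τ s I2 * h (insert a (I1 ∪ I2)))
              + τ * τ * (w τ s I1 * w τ s I2 * h (insert a (I1 ∪ I2)))) := by
      refine Finset.sum_congr rfl fun I1 hI1 => ?_
      rw [Finset.sum_powerset_insert ha, ← Finset.sum_add_distrib]
      refine Finset.sum_congr rfl fun I2 hI2 => ?_
      rw [hw1 I2 hI2, hw2 I1 hI1, hw2 I2 hI2, Finset.insert_union, Finset.insert_union,
        Finset.union_insert, Finset.insert_idem]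
      ring
    rw [rhs1, rhs2]
    rw [← Finset.sum_add_distrib]
    simp only [← Finset.sum_add_distrib, Finset.mul_sum]
    refine Finset.sum_congr rfl fun I1 _ => ?_
    refine Finset.sum_congr rfl fun I2 _ => ?_
    ring

section LinAlg

open Submodule Module

variable {F : Type*} [Field F]

/-- Rank of an arbitrary submatrix is at most the rank. -/
lemma rank_submatrix_le'' {m m' p q : Type*} [Fintype m] [Fintype m'] [Fintype p] [Fintype q]
    (A : Matrix m m' F) (f : p → m) (g : q → m') :
    (A.submatrix f g).rank ≤ A.rank := by
  rw [Matrix.rank_eq_finrank_span_cols, Matrix.rank_eq_finrank_span_cols]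
  set L : (m → F) →ₗ[F] (p → F) := LinearMap.funLeft F F f with hL
  have hsub : Set.range ((A.submatrix f g).transpose) ⊆ L '' (Set.range (A.transpose)) := by
    rintro x ⟨j, rfl⟩
    exact ⟨A.transpose (g j), ⟨g j, rfl⟩, rfl⟩
  have hspan : span F (Set.range ((A.submatrix f g).transpose))
      ≤ (span F (Set.range (A.transpose))).map L := by
    rw [← span_image]
    exact span_mono hsub
  calc finrank F (span F (Set.range ((A.submatrix f g).transpose)))
      ≤ finrank F ((span F (Set.range (A.transpose))).map L) := Submodule.finrank_mono hspan
    _ ≤ finrank F (span F (Set.range (A.transpose))) := Submodule.finrank_map_le L _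

/-- From a finite family of vectors one can select a finset of indices giving a basis of
the span. -/
lemma exists_finset_linearIndependent {V ι : Type*} [AddCommGroup V] [Module F V]
    [Fintype ι] (v : ι → V) :
    ∃ s : Finset ι, s.card = finrank F (span F (Set.range v)) ∧
      LinearIndependent F (fun i : s => v i) := by
  classical
  obtain ⟨b, hbsub, hbspan, hbli⟩ := exists_linearIndependent F (Set.range v)
  haveI : Fintype ↥b := ((Set.finite_range v).subset hbsub).fintype
  have hchoice : ∀ x : ↥b, ∃ i : ι, v i = x := fun x => hbsub x.2
  choose pre hpre using hchoice
  set s : Finset ι := Finset.image pre Finset.univ with hs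
  have hmem : ∀ i : ↥s, v ↑i ∈ b := by
    rintro ⟨i, hi⟩
    simp only [hs, Finset.mem_image, Finset.mem_univ, true_and] at hi
    obtain ⟨x, rfl⟩ := hi
    rw [hpre x]
    exact x.2
  set e : ↥s → ↥b := fun i => ⟨v ↑i, hmem i⟩ with he
  have heinj : Function.Injective e := by
    rintro ⟨i, hi⟩ ⟨j, hj⟩ hij
    have hvij : v i = v j := congrArg Subtype.val hij
    simp only [hs, Finset.mem_image, Finset.mem_univ, true_and] at hi hj
    obtain ⟨x, rfl⟩ := hi
    obtain ⟨y, rfl⟩ := hj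
    have hxy : x = y := by
      apply Subtype.ext
      rw [← hpre x, ← hpre y]
      exact hvij
    simp [hxy]
  have hli : LinearIndependent F (fun i : ↥s => v ↑i) := by
    have : (fun i : ↥s => v ↑i) = (fun x : ↥b => (x : V)) ∘ e := by
      funext i; rfl
    rw [this]
    exact hbli.comp e heinj
  have hrange : Set.range (fun i : ↥s => v ↑i) = b := by
    ext x
    constructor
    · rintro ⟨i, rfl⟩
      exact hmem i
    · intro hx
      have hps : pre ⟨x, hx⟩ ∈ s := by
        simp only [hs, Finset.mem_image, Finset.mem_univ, true_and]
        exact ⟨⟨x, hx⟩, rfl⟩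
      exact ⟨⟨pre ⟨x, hx⟩, hps⟩, hpre ⟨x, hx⟩⟩
  refine ⟨s, ?_, hli⟩
  have h1 : finrank F (span F (Set.range v)) = finrank F (span F (Set.range (fun i : ↥s => v ↑i))) := by
    rw [hrange, hbspan]
  rw [h1, finrank_span_eq_card hli, Fintype.card_coe]

end LinAlg

section Key

open Submodule Module

/-- Given a set `R` of independent rows of `A` and a row-restriction `I1`, there is a column
set `C` with at least `|R ∩ I1|` elements such that for any `I2`, the principal submatrix on
`I1 ∪ I2` has rank at least `|C ∩ I2|`. -/
lemma key_exists {F : Type} [Field F] {n : ℕ} (A : Matrix (Fin n) (Fin n) F)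
    (R : Finset (Fin n)) (hR : LinearIndependent F (fun i : ↥R => A ↑i))
    (I1 : Finset (Fin n)) :
    ∃ C : Finset (Fin n), (R ∩ I1).card ≤ C.card ∧
      ∀ I2 : Finset (Fin n), (C ∩ I2).card ≤ (principalSubmatrix A (I1 ∪ I2)).rank := by
  classical
  set B : Matrix ↥I1 (Fin n) F := A.submatrix (fun i : ↥I1 => (i : Fin n)) id with hB
  set cols : Fin n → (↥I1 → F) := fun j => fun i : ↥I1 => A ↑i j with hcols
  obtain ⟨C, hCcard, hCli⟩ := exists_finset_linearIndependent (F := F) cols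
  have hCrank : C.card = B.rank := by
    rw [Matrix.rank_eq_finrank_span_cols]
    exact hCcard
  have hlow : (R ∩ I1).card ≤ B.rank := by
    set inc : ↥(R ∩ I1) → ↥R := fun i => ⟨↑i, (Finset.mem_inter.mp i.2).1⟩ with hinc
    have hincinj : Function.Injective inc := by
      rintro ⟨i, hi⟩ ⟨j, hj⟩ hij
      exact Subtype.ext (congrArg Subtype.val hij : i = j)
    have hu : LinearIndependent F (fun i : ↥(R ∩ I1) => A ↑i) := hR.comp inc hincinj
    have hsub : Set.range (fun i : ↥(R ∩ I1) => A ↑i) ⊆ Set.range B := by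
      rintro x ⟨i, rfl⟩
      exact ⟨⟨↑i, (Finset.mem_inter.mp i.2).2⟩, rfl⟩
    calc (R ∩ I1).card = Fintype.card ↥(R ∩ I1) := (Fintype.card_coe _).symm
      _ = finrank F (span F (Set.range (fun i : ↥(R ∩ I1) => A ↑i))) :=
          (finrank_span_eq_card hu).symm
      _ ≤ finrank F (span F (Set.range B)) := Submodule.finrank_mono (span_mono hsub)
      _ = B.rank := (Matrix.rank_eq_finrank_span_row B).symm
  refine ⟨C, by omega, ?_⟩
  intro I2
  set N : Matrix ↥I1 ↥(C ∩ I2) F :=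
    A.submatrix (fun i : ↥I1 => (i : Fin n)) (fun j : ↥(C ∩ I2) => (j : Fin n)) with hN
  have hNT : LinearIndependent F N.transpose := by
    set inc2 : ↥(C ∩ I2) → ↥C := fun j => ⟨↑j, (Finset.mem_inter.mp j.2).1⟩ with hinc2
    have hinc2inj : Function.Injective inc2 := by
      rintro ⟨i, hi⟩ ⟨j, hj⟩ hij
      exact Subtype.ext (congrArg Subtype.val hij : i = j)
    have : N.transpose = (fun j : ↥C => cols ↑j) ∘ inc2 := by
      funext j i; rfl
    rw [this]
    exact hCli.comp inc2 hinc2inj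
  have hNrank : (C ∩ I2).card = N.rank := by
    rw [← Matrix.rank_transpose, (LinearIndependent.rank_matrix (M := N.transpose) hNT), Fintype.card_coe]
  have hle : N.rank ≤ (principalSubmatrix A (I1 ∪ I2)).rank := by
    have hEq : N = (principalSubmatrix A (I1 ∪ I2)).submatrix
        (fun i : ↥I1 => (⟨↑i, Finset.mem_union_left I2 i.2⟩ : ↥(I1 ∪ I2)))
        (fun j : ↥(C ∩ I2) =>
          (⟨↑j, Finset.mem_union_right I1 (Finset.mem_inter.mp j.2).2⟩ : ↥(I1 ∪ I2))) := by
      funext i j; rfl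
    rw [hEq]
    exact rank_submatrix_le'' _ _ _
  omega

end Key


/-- Main probabilistic estimate. -/
lemma prob_lower (τ : ℝ) (hτ0 : 0 < τ) (hτ1 : τ ≤ 1) (s R : Finset α) (hRs : R ⊆ s)
    (E : Finset α → Prop) (C : Finset α → Finset α)
    (hCs : ∀ I1, C I1 ⊆ s)
    (hCcard : ∀ I1, (I1 ∩ R).card ≤ (C I1).card)
    (hE : ∀ I1 I2, (τ^2/20) * (R.card : ℝ) ≤ ((I2 ∩ C I1).card : ℝ) → E (I1 ∪ I2)) :
    1 - 2 * Real.exp (-(τ^2/20) * (R.card : ℝ)) ≤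
      ∑ I ∈ s.powerset, w (1 - (1-τ)^2) s I * ind (E I) := by
  set κ : ℝ := τ^2/20 with hκ
  set r : ℝ := (R.card : ℝ) with hr
  have hr0 : 0 ≤ r := Nat.cast_nonneg _
  have hκ0 : 0 < κ := by positivity
  have hκr : 0 ≤ κ * r := mul_nonneg hκ0.le hr0
  have hx1 : Real.exp (-κ * r) ≤ 1 := by
    rw [Real.exp_le_one_iff]
    nlinarith
  rw [decouple τ s (fun I => ind (E I))]
  have inner_bound : ∀ I1 ∈ s.powerset,
      ind (τ * r / 2 ≤ ((I1 ∩ R).card : ℝ)) * (1 - Real.exp (-κ * r))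
        ≤ ∑ I2 ∈ s.powerset, w τ s I2 * ind (E (I1 ∪ I2)) := by
    intro I1 _
    have step1 : ∑ I2 ∈ s.powerset, w τ s I2 * ind (κ * r ≤ ((I2 ∩ C I1).card : ℝ))
        ≤ ∑ I2 ∈ s.powerset, w τ s I2 * ind (E (I1 ∪ I2)) := by
      refine Finset.sum_le_sum fun I2 _ => ?_
      exact mul_le_mul_of_nonneg_left (ind_le_ind (hE I1 I2)) (w_nonneg hτ0.le hτ1 s I2)
    by_cases hgood : τ * r / 2 ≤ ((I1 ∩ R).card : ℝ)
    · have hRC : ((I1 ∩ R).card : ℝ) ≤ ((C I1).card : ℝ) := by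
        exact_mod_cast hCcard I1
      have hCc : τ * r / 2 ≤ ((C I1).card : ℝ) := le_trans hgood hRC
      have h1 : κ * r ≤ τ * ((C I1).card : ℝ) / 2 := by nlinarith
      have h2 := sum_w_ind_ge τ hτ0.le hτ1 s (C I1) (hCs I1) (κ * r) hκr h1
      have h3 : Real.exp (-(0.15 * τ * ((C I1).card : ℝ))) ≤ Real.exp (-κ * r) := by
        apply Real.exp_le_exp.mpr
        nlinarith
      have hg1 : ind (τ * r / 2 ≤ ((I1 ∩ R).card : ℝ)) = 1 := by
        unfold ind; rw [if_pos hgood]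
      rw [hg1, one_mul]
      calc (1:ℝ) - Real.exp (-κ * r)
          ≤ 1 - Real.exp (-(0.15 * τ * ((C I1).card : ℝ))) := by linarith
        _ ≤ ∑ I2 ∈ s.powerset, w τ s I2 * ind (κ * r ≤ ((I2 ∩ C I1).card : ℝ)) := h2
        _ ≤ _ := step1
    · have hg0 : ind (τ * r / 2 ≤ ((I1 ∩ R).card : ℝ)) = 0 := by
        unfold ind; rw [if_neg hgood]
      rw [hg0, zero_mul]
      exact Finset.sum_nonneg fun I2 _ => mul_nonneg (w_nonneg hτ0.le hτ1 s I2) (ind_nonneg _)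
  have main : (1 - Real.exp (-κ * r)) *
        ∑ I1 ∈ s.powerset, w τ s I1 * ind (τ * r / 2 ≤ ((I1 ∩ R).card : ℝ))
      ≤ ∑ I1 ∈ s.powerset, ∑ I2 ∈ s.powerset, w τ s I1 * w τ s I2 * ind (E (I1 ∪ I2)) := by
    rw [Finset.mul_sum]
    refine Finset.sum_le_sum fun I1 hI1 => ?_
    have h := inner_bound I1 hI1
    have hw := w_nonneg hτ0.le hτ1 s I1
    calc (1 - Real.exp (-κ * r)) * (w τ s I1 * ind (τ * r / 2 ≤ ((I1 ∩ R).card : ℝ)))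
        = w τ s I1 * (ind (τ * r / 2 ≤ ((I1 ∩ R).card : ℝ)) * (1 - Real.exp (-κ * r))) := by
          ring
      _ ≤ w τ s I1 * ∑ I2 ∈ s.powerset, w τ s I2 * ind (E (I1 ∪ I2)) :=
          mul_le_mul_of_nonneg_left h hw
      _ = ∑ I2 ∈ s.powerset, w τ s I1 * w τ s I2 * ind (E (I1 ∪ I2)) := by
          rw [Finset.mul_sum]
          exact Finset.sum_congr rfl fun I2 _ => by ring
  have hmass := sum_w_ind_ge τ hτ0.le hτ1 s R hRs (τ * r / 2)
    (by positivity) (le_of_eq (by rw [hr]))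
  set x : ℝ := Real.exp (-κ * r) with hxdef
  set x' : ℝ := Real.exp (-(0.15 * τ * (R.card : ℝ))) with hx'def
  have hx'x : x' ≤ x := by
    rw [hxdef, hx'def]
    apply Real.exp_le_exp.mpr
    rw [hr] at *
    nlinarith
  have hx'0 : 0 < x' := Real.exp_pos _
  have hx0 : 0 < x := Real.exp_pos _
  have hmass0 : 1 - x' ≤ ∑ I1 ∈ s.powerset, w τ s I1 * ind (τ * r / 2 ≤ ((I1 ∩ R).card : ℝ)) :=
    hmass
  calc 1 - 2 * x ≤ (1 - x) * (1 - x') := by nlinarith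
    _ ≤ (1 - x) * ∑ I1 ∈ s.powerset, w τ s I1 * ind (τ * r / 2 ≤ ((I1 ∩ R).card : ℝ)) :=
        mul_le_mul_of_nonneg_left hmass0 (by linarith)
    _ ≤ _ := main

end RRM

/-- **Random restrictions of matrices** (Proposition 1.1):
for every `σ ∈ (0,1]` there exists `κ ∈ (0,1]` such that for every field `F` and every
matrix `A ∈ F^{n×n}`, a `σ`-random principal submatrix of `A` has rank at least
`κ·rank A` with probability at least `1 - 2·e^{-κ·rank A}`. -/
theorem random_restriction_matrix (σ : ℝ) (hσ0 : 0 < σ) (hσ1 : σ ≤ 1) :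
    ∃ κ : ℝ, 0 < κ ∧ κ ≤ 1 ∧
      ∀ (F : Type) [Field F] (n : ℕ) (A : Matrix (Fin n) (Fin n) F),
        1 - 2 * Real.exp (-κ * A.rank) ≤
          subsetPr n σ
            (fun I => κ * (A.rank : ℝ) ≤ ((principalSubmatrix A I).rank : ℝ)) := by
  classical
  set τ : ℝ := 1 - Real.sqrt (1 - σ) with hτdef
  have h1σ : 0 ≤ 1 - σ := by linarith
  have hsqlt : Real.sqrt (1 - σ) < 1 := by
    nlinarith [Real.sq_sqrt h1σ, Real.sqrt_nonneg (1 - σ)]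
  have hτ0 : 0 < τ := by rw [hτdef]; linarith
  have hτ1 : τ ≤ 1 := by
    have := Real.sqrt_nonneg (1 - σ)
    rw [hτdef]; linarith
  have hστ : σ = 1 - (1 - τ)^2 := by
    have h : (1 : ℝ) - τ = Real.sqrt (1 - σ) := by rw [hτdef]; ring
    rw [h, Real.sq_sqrt h1σ]; ring
  refine ⟨τ^2/20, by positivity, by nlinarith, ?_⟩
  intro F _ n A
  obtain ⟨R, hRcard, hRli⟩ := RRM.exists_finset_linearIndependent (F := F)
    (fun i : Fin n => A i)
  have hRrank : R.card = A.rank := by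
    rw [Matrix.rank_eq_finrank_span_row]
    exact hRcard
  choose C hC1 hC2 using RRM.key_exists A R hRli
  set E : Finset (Fin n) → Prop :=
    fun I => τ^2/20 * (A.rank : ℝ) ≤ ((principalSubmatrix A I).rank : ℝ) with hE
  have hconn : subsetPr n σ E
      = ∑ I ∈ (Finset.univ : Finset (Fin n)).powerset, RRM.w σ Finset.univ I * RRM.ind (E I) := by
    rw [Finset.powerset_univ]
    unfold subsetPr RRM.w RRM.ind
    refine Finset.sum_congr rfl fun I _ => ?_
    rw [Finset.card_univ, Fintype.card_fin]
    by_cases h : E I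
    · rw [if_pos h, if_pos h, mul_one]
    · rw [if_neg h, if_neg h, mul_zero]
  rw [hconn, hστ]
  have hcast : (A.rank : ℝ) = (R.card : ℝ) := by exact_mod_cast congrArg Nat.cast hRrank.symm
  rw [hcast]
  apply RRM.prob_lower τ hτ0 hτ1 Finset.univ R (Finset.subset_univ R) E C
    (fun I1 => Finset.subset_univ _) (fun I1 => by rw [Finset.inter_comm]; exact hC1 I1)
  intro I1 I2 hle
  rw [hE]
  rw [hcast]
  refine le_trans hle ?_
  rw [Finset.inter_comm]
  exact_mod_cast hC2 I1 I2
end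

section
/- For every σ ∈ [0,1], every n ∈ ℕ, every subset A ⊆ {0,1}^n, and every real k ≥ 0: π_σ^n(A)² · Pr_{x~π_σ^n}[h₂(x;A) ≥ k] ≤ 2^{−k}, where π_σ^n(A) is the probability of A under π_σ^n. -/
/-- The weight of a point `x ∈ {0,1}^n` under the product distribution `π_σ^n`. -/
noncomputable def cubeWeight (n : ℕ) (σ : ℝ) (x : Fin n → Bool) : ℝ :=
  ∏ i, if x i then σ else 1 - σ

open Classical in
/-- The probability of the event `E` under the product distribution `π_σ^n` on `{0,1}^n`,
where each coordinate is independently `1` with probability `σ`. -/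
noncomputable def cubePr (n : ℕ) (σ : ℝ) (E : (Fin n → Bool) → Prop) : ℝ :=
  ∑ x : Fin n → Bool, if E x then cubeWeight n σ x else 0

/-- The two-point distance `h₂(x; A)`, valued in `ENNReal` (so `h₂(x; ∅) = +∞`):
the minimum over `y, z ∈ A` of the number of coordinates of `x` differing both
from `y` and from `z`. -/
noncomputable def h2 {n : ℕ} (x : Fin n → Bool) (A : Set (Fin n → Bool)) : ENNReal :=
  ⨅ (y ∈ A) (z ∈ A),
    (((Finset.univ.filter fun i : Fin n => x i ≠ y i ∧ x i ≠ z i).card : ℕ) : ENNReal)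


private lemma tal_B1 (p s : ℝ) (hp0 : 0 ≤ p) (hp1 : p ≤ 1) (hs : 1/2 ≤ s) (hs' : s ≤ 1) :
    ((1-p)*s + p)^2 * ((1-p) + p*s) ≤ s := by
  nlinarith [mul_nonneg (mul_nonneg (sub_nonneg.2 hp1) (sub_nonneg.2 hs'))
      (by nlinarith : (0:ℝ) ≤ 1 - (1+p)*(1-s)),
    mul_nonneg (mul_nonneg (mul_nonneg hp0 (sub_nonneg.2 hp1)) (sub_nonneg.2 hp1))
      (pow_nonneg (by linarith : (0:ℝ) ≤ 1-s) 3)]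

private lemma tal_B2 (p s : ℝ) (hp0 : 0 ≤ p) (hp1 : p ≤ 1) (hs : 1/2 ≤ s) (hs' : s ≤ 1) :
    ((1-p)/2 + p*s)^2 * (2*(1-p)*s + p) ≤ s := by
  have ha : (0:ℝ) ≤ 1 - s := by linarith
  have ha' : (0:ℝ) ≤ s - 1/2 := by linarith
  nlinarith [mul_nonneg hp0 ha, mul_nonneg (sub_nonneg.2 hp1) ha, mul_nonneg hp0 ha',
    mul_nonneg (sub_nonneg.2 hp1) ha', sq_nonneg (p-2*(1-s)), sq_nonneg (p*s),
    sq_nonneg (p*(2*s-1)), sq_nonneg (1-p), sq_nonneg p, sq_nonneg (1-s),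
    mul_nonneg (mul_nonneg hp0 hp0) ha, mul_nonneg (mul_nonneg hp0 ha) ha',
    mul_nonneg (mul_nonneg (sub_nonneg.2 hp1) ha) ha',
    mul_nonneg (mul_nonneg hp0 (sub_nonneg.2 hp1)) ha,
    mul_nonneg (mul_nonneg hp0 (sub_nonneg.2 hp1)) ha']

private lemma tal_BB (p s0 s1 : ℝ) (hp0 : 0 ≤ p) (hp1 : p ≤ 1)
    (h0 : 1/2 ≤ s0) (h01 : s0 ≤ s1) (h1 : s1 ≤ 1) :
    ((1-p)*s0 + p*s1)^2 * ((1-p)*s1 + p*s0) ≤ s0 * s1 := by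
  have hs1 : (0:ℝ) < s1 := by linarith
  set r : ℝ := s0 / s1 with hr
  have hr1 : 1/2 ≤ r := by rw [hr, le_div_iff₀ hs1]; nlinarith
  have hr2 : r ≤ 1 := by rw [hr, div_le_one hs1]; exact h01
  have hr0 : 0 ≤ r := by positivity
  have hs0 : s0 = r * s1 := by rw [hr, div_mul_cancel₀ _ hs1.ne']
  have key := tal_B1 p r hp0 hp1 hr1 hr2
  calc ((1-p)*s0 + p*s1)^2 * ((1-p)*s1 + p*s0)
      = (((1-p)*r + p)^2 * ((1-p) + p*r)) * s1^3 := by rw [hs0]; ring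
    _ ≤ r * s1^3 := mul_le_mul_of_nonneg_right key (by positivity)
    _ ≤ s0 * s1 := by rw [hs0]; nlinarith [mul_nonneg hr0 (mul_nonneg hs1.le hs1.le)]

private lemma tal_core_mixed (p s0 s1 t0 t1 : ℝ) (hp0 : 0 ≤ p) (hp1 : p ≤ 1)
    (hs00 : 0 ≤ s0) (hs0 : s0 ≤ 1/2) (hs1 : 1/2 ≤ s1) (hs1' : s1 ≤ 1)
    (ht0 : 0 ≤ t0) (ht0' : t0 ≤ 2) (ht1 : 0 ≤ t1) (h1 : s1 * t1 ≤ 1) :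
    ((1-p)*s0 + p*s1)^2 * ((1-p)*t0 + p*t1) ≤ 1 := by
  have hs1p : (0:ℝ) < s1 := by linarith
  have hB2 := tal_B2 p s1 hp0 hp1 hs1 hs1'
  have hA0 : (0:ℝ) ≤ (1-p)*s0 + p*s1 := by
    nlinarith [mul_nonneg (sub_nonneg.2 hp1) hs00, mul_nonneg hp0 hs1p.le]
  have hAB : (1-p)*s0 + p*s1 ≤ (1-p)/2 + p*s1 := by
    nlinarith [mul_nonneg (sub_nonneg.2 hp1) (by linarith : (0:ℝ) ≤ 1/2 - s0)]
  have hS2 : ((1-p)*s0 + p*s1)^2 ≤ ((1-p)/2 + p*s1)^2 := pow_le_pow_left₀ hA0 hAB 2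
  have hTs : ((1-p)*t0 + p*t1) * s1 ≤ 2*(1-p)*s1 + p := by
    nlinarith [mul_le_mul_of_nonneg_left h1 hp0,
      mul_le_mul_of_nonneg_left (mul_le_mul_of_nonneg_right ht0' hs1p.le) (sub_nonneg.2 hp1)]
  have hall : (((1-p)*s0 + p*s1)^2 * ((1-p)*t0 + p*t1)) * s1 ≤ 1 * s1 := by
    calc (((1-p)*s0 + p*s1)^2 * ((1-p)*t0 + p*t1)) * s1
        = ((1-p)*s0 + p*s1)^2 * (((1-p)*t0 + p*t1) * s1) := by ring
      _ ≤ ((1-p)/2 + p*s1)^2 * (2*(1-p)*s1 + p) := by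
          apply mul_le_mul hS2 hTs ?_ (sq_nonneg _)
          nlinarith [mul_nonneg (mul_nonneg (sub_nonneg.2 hp1) ht0) hs1p.le,
            mul_nonneg (mul_nonneg hp0 ht1) hs1p.le]
      _ ≤ s1 := hB2
      _ = 1 * s1 := (one_mul s1).symm
  exact le_of_mul_le_mul_right hall hs1p

private lemma tal_core_bigbig (p s0 s1 t0 t1 : ℝ) (hp0 : 0 ≤ p) (hp1 : p ≤ 1)
    (hs0 : 1/2 ≤ s0) (hs0' : s0 ≤ 1) (hs1 : 1/2 ≤ s1) (hs1' : s1 ≤ 1)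
    (ht0 : 0 ≤ t0) (ht1 : 0 ≤ t1) (h0 : s0 * t0 ≤ 1) (h1 : s1 * t1 ≤ 1) :
    ((1-p)*s0 + p*s1)^2 * ((1-p)*t0 + p*t1) ≤ 1 := by
  have hs0p : (0:ℝ) < s0 := by linarith
  have hs1p : (0:ℝ) < s1 := by linarith
  have hBB : ((1-p)*s0 + p*s1)^2 * ((1-p)*s1 + p*s0) ≤ s0 * s1 := by
    rcases le_total s0 s1 with h | h
    · exact tal_BB p s0 s1 hp0 hp1 hs0 h hs1'
    · have := tal_BB (1-p) s1 s0 (by linarith) (by linarith) hs1 h hs0'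
      calc ((1-p)*s0 + p*s1)^2 * ((1-p)*s1 + p*s0)
          = ((1-(1-p))*s1 + (1-p)*s0)^2 * ((1-(1-p))*s0 + (1-p)*s1) := by ring
        _ ≤ s1 * s0 := this
        _ = s0 * s1 := mul_comm _ _
  have hTs : ((1-p)*t0 + p*t1) * (s0 * s1) ≤ (1-p)*s1 + p*s0 := by
    nlinarith [mul_le_mul_of_nonneg_right (mul_le_mul_of_nonneg_left h0 (sub_nonneg.2 hp1)) hs1p.le,
      mul_le_mul_of_nonneg_right (mul_le_mul_of_nonneg_left h1 hp0) hs0p.le]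
  have hall : (((1-p)*s0 + p*s1)^2 * ((1-p)*t0 + p*t1)) * (s0*s1) ≤ 1 * (s0*s1) := by
    calc (((1-p)*s0 + p*s1)^2 * ((1-p)*t0 + p*t1)) * (s0*s1)
        = ((1-p)*s0 + p*s1)^2 * (((1-p)*t0 + p*t1) * (s0*s1)) := by ring
      _ ≤ ((1-p)*s0 + p*s1)^2 * ((1-p)*s1 + p*s0) := by
          apply mul_le_mul_of_nonneg_left hTs (sq_nonneg _)
      _ ≤ s0 * s1 := hBB
      _ = 1 * (s0*s1) := (one_mul _).symm
  exact le_of_mul_le_mul_right hall (by positivity)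

/-- The core scalar inequality for the inductive step. -/
private lemma tal_core (p s0 s1 t0 t1 : ℝ) (hp0 : 0 ≤ p) (hp1 : p ≤ 1)
    (hs00 : 0 ≤ s0) (hs01 : s0 ≤ 1) (hs10 : 0 ≤ s1) (hs11 : s1 ≤ 1)
    (ht00 : 0 ≤ t0) (ht02 : t0 ≤ 2) (ht10 : 0 ≤ t1) (ht12 : t1 ≤ 2)
    (h0 : s0 * t0 ≤ 1) (h1 : s1 * t1 ≤ 1) :
    ((1-p)*s0 + p*s1)^2 * ((1-p)*t0 + p*t1) ≤ 1 := by
  rcases le_total s0 (1/2) with hs0 | hs0 <;> rcases le_total s1 (1/2) with hs1 | hs1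
  · -- both small
    have hS : (1-p)*s0 + p*s1 ≤ 1/2 := by nlinarith
    have hT : (1-p)*t0 + p*t1 ≤ 2 := by nlinarith
    have hS0 : (0:ℝ) ≤ (1-p)*s0 + p*s1 := by
      nlinarith [mul_nonneg (sub_nonneg.2 hp1) hs00, mul_nonneg hp0 hs10]
    have hT0 : (0:ℝ) ≤ (1-p)*t0 + p*t1 := by
      nlinarith [mul_nonneg (sub_nonneg.2 hp1) ht00, mul_nonneg hp0 ht10]
    have := mul_le_mul (pow_le_pow_left₀ hS0 hS 2) hT hT0 (by norm_num : (0:ℝ) ≤ (1/2)^2)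
    nlinarith [this]
  · -- s0 small, s1 big
    exact tal_core_mixed p s0 s1 t0 t1 hp0 hp1 hs00 hs0 hs1 hs11 ht00 ht02 ht10 h1
  · -- s0 big, s1 small : swap
    have := tal_core_mixed (1-p) s1 s0 t1 t0 (by linarith) (by linarith) hs10 hs1 hs0 hs01 ht10 ht12 ht00 h0
    calc ((1-p)*s0 + p*s1)^2 * ((1-p)*t0 + p*t1)
        = ((1-(1-p))*s1 + (1-p)*s0)^2 * ((1-(1-p))*t1 + (1-p)*t0) := by ring
      _ ≤ 1 := this
  · exact tal_core_bigbig p s0 s1 t0 t1 hp0 hp1 hs0 hs01 hs1 hs11 ht00 ht10 h0 h1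

/-- sections / projections -/
def secF {n : ℕ} (b : Bool) (A : Finset (Fin (n+1) → Bool)) : Finset (Fin n → Bool) :=
  Finset.univ.filter (fun x => Fin.cons b x ∈ A)

def projF {n : ℕ} (A : Finset (Fin (n+1) → Bool)) : Finset (Fin n → Bool) :=
  secF false A ∪ secF true A

noncomputable def PrF (n : ℕ) (σ : ℝ) (A : Finset (Fin n → Bool)) : ℝ :=
  ∑ x ∈ A, cubeWeight n σ x

def cnt {n : ℕ} (x y z : Fin n → Bool) : ℕ :=
  (Finset.univ.filter fun i => x i ≠ y i ∧ x i ≠ z i).card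

noncomputable def Gf {n : ℕ} (x : Fin n → Bool) (A B : Finset (Fin n → Bool)) : ℝ :=
  if h : (A ×ˢ B).Nonempty then (A ×ˢ B).inf' h (fun yz => (2:ℝ) ^ cnt x yz.1 yz.2) else 1

lemma cubeWeight_nonneg {n : ℕ} {σ : ℝ} (h0 : 0 ≤ σ) (h1 : σ ≤ 1) (x : Fin n → Bool) :
    0 ≤ cubeWeight n σ x :=
  Finset.prod_nonneg fun i _ => by split <;> linarith

lemma cubeWeight_cons {n : ℕ} (σ : ℝ) (b : Bool) (x : Fin n → Bool) :
    cubeWeight (n+1) σ (Fin.cons b x) = (if b then σ else 1-σ) * cubeWeight n σ x := by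
  unfold cubeWeight
  rw [Fin.prod_univ_succ]
  simp [Fin.cons_zero, Fin.cons_succ]

lemma sum_cube_succ {n : ℕ} (f : (Fin (n+1) → Bool) → ℝ) :
    ∑ x, f x = (∑ y : Fin n → Bool, f (Fin.cons false y))
      + (∑ y : Fin n → Bool, f (Fin.cons true y)) := by
  rw [← (Fin.consEquiv (fun _ : Fin (n+1) => Bool)).sum_comp f]
  rw [Fintype.sum_prod_type]
  rw [Fintype.sum_bool]
  rw [add_comm]
  rfl

lemma mem_secF {n : ℕ} {b : Bool} {A : Finset (Fin (n+1) → Bool)} {y : Fin n → Bool} :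
    y ∈ secF b A ↔ Fin.cons b y ∈ A := by simp [secF]

lemma secF_subset_projF {n : ℕ} (b : Bool) (A : Finset (Fin (n+1) → Bool)) :
    secF b A ⊆ projF A := by
  cases b
  · exact Finset.subset_union_left
  · exact Finset.subset_union_right

lemma projF_nonempty {n : ℕ} {A : Finset (Fin (n+1) → Bool)} (hA : A.Nonempty) :
    (projF A).Nonempty := by
  obtain ⟨x, hx⟩ := hA
  refine ⟨Fin.tail x, secF_subset_projF (x 0) A ?_⟩
  rw [mem_secF, Fin.cons_self_tail]
  exact hx

lemma mem_projF {n : ℕ} {A : Finset (Fin (n+1) → Bool)} {y : Fin n → Bool} :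
    y ∈ projF A ↔ ∃ c, Fin.cons c y ∈ A := by
  constructor
  · intro h
    rcases Finset.mem_union.1 h with h | h
    · exact ⟨false, mem_secF.1 h⟩
    · exact ⟨true, mem_secF.1 h⟩
  · rintro ⟨c, hc⟩
    exact secF_subset_projF c A (mem_secF.2 hc)

lemma PrF_nonneg {n : ℕ} {σ : ℝ} (h0 : 0 ≤ σ) (h1 : σ ≤ 1) (A : Finset (Fin n → Bool)) :
    0 ≤ PrF n σ A :=
  Finset.sum_nonneg fun x _ => cubeWeight_nonneg h0 h1 x

lemma PrF_mono {n : ℕ} {σ : ℝ} (h0 : 0 ≤ σ) (h1 : σ ≤ 1) {A B : Finset (Fin n → Bool)}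
    (hAB : A ⊆ B) : PrF n σ A ≤ PrF n σ B :=
  Finset.sum_le_sum_of_subset_of_nonneg hAB fun x _ _ => cubeWeight_nonneg h0 h1 x

lemma PrF_succ {n : ℕ} (σ : ℝ) (A : Finset (Fin (n+1) → Bool)) :
    PrF (n+1) σ A = (1-σ) * PrF n σ (secF false A) + σ * PrF n σ (secF true A) := by
  classical
  have : PrF (n+1) σ A = ∑ x : Fin (n+1) → Bool, if x ∈ A then cubeWeight (n+1) σ x else 0 := by
    rw [PrF, Finset.sum_ite_mem, Finset.univ_inter]
  rw [this, sum_cube_succ (fun x => if x ∈ A then cubeWeight (n+1) σ x else 0)]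
  have h : ∀ b : Bool, (∑ y : Fin n → Bool, if Fin.cons b y ∈ A then cubeWeight (n+1) σ (Fin.cons b y) else 0)
      = (if b then σ else 1-σ) * PrF n σ (secF b A) := by
    intro b
    rw [PrF, ← Finset.univ_inter (secF b A), ← Finset.sum_ite_mem, Finset.mul_sum]
    refine Finset.sum_congr rfl fun y _ => ?_
    rw [cubeWeight_cons]
    by_cases hy : Fin.cons b y ∈ A
    · rw [if_pos hy, if_pos (mem_secF.2 hy)]
    · rw [if_neg hy, if_neg (fun hc => hy (mem_secF.1 hc)), mul_zero]
  rw [h false, h true]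
  simp

lemma cnt_cons {n : ℕ} (b c d : Bool) (x y z : Fin n → Bool) :
    cnt (Fin.cons b x) (Fin.cons c y) (Fin.cons d z)
      = (if b ≠ c ∧ b ≠ d then 1 else 0) + cnt x y z := by
  classical
  unfold cnt
  rw [Finset.card_filter, Finset.card_filter, Fin.sum_univ_succ]
  simp [Fin.cons_zero, Fin.cons_succ]

lemma Gf_nonneg {n : ℕ} (x : Fin n → Bool) (A B : Finset (Fin n → Bool)) : 0 ≤ Gf x A B := by
  unfold Gf
  split
  · next h =>
    obtain ⟨yz, hyz, heq⟩ := Finset.exists_mem_eq_inf' h (fun yz => (2:ℝ) ^ cnt x yz.1 yz.2)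
    rw [heq]; positivity
  · norm_num

lemma Gf_le {n : ℕ} {x y z : Fin n → Bool} {A B : Finset (Fin n → Bool)}
    (hy : y ∈ A) (hz : z ∈ B) : Gf x A B ≤ (2:ℝ) ^ cnt x y z := by
  have hne : (A ×ˢ B).Nonempty := ⟨(y, z), Finset.mem_product.2 ⟨hy, hz⟩⟩
  unfold Gf
  split
  · rw [Finset.inf'_le_iff]
    exact ⟨(y, z), Finset.mem_product.2 ⟨hy, hz⟩, le_rfl⟩
  · next h => exact absurd hne h

lemma Gf_exists {n : ℕ} (x : Fin n → Bool) {A B : Finset (Fin n → Bool)}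
    (hA : A.Nonempty) (hB : B.Nonempty) :
    ∃ y ∈ A, ∃ z ∈ B, Gf x A B = (2:ℝ) ^ cnt x y z := by
  have hne : (A ×ˢ B).Nonempty := hA.product hB
  unfold Gf
  split
  · next h =>
    obtain ⟨yz, hyz, heq⟩ := Finset.exists_mem_eq_inf' h (fun yz => (2:ℝ) ^ cnt x yz.1 yz.2)
    rcases Finset.mem_product.1 hyz with ⟨h1, h2⟩
    exact ⟨yz.1, h1, yz.2, h2, heq⟩
  · next h => exact absurd hne h

/-- assemble the inductive step from the mass bounds -/
private lemma tal_assemble (p a0 a1 b0 b1 As Bs T0 T1 : ℝ)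
    (hp0 : 0 ≤ p) (hp1 : p ≤ 1)
    (ha0 : 0 ≤ a0) (ha1 : 0 ≤ a1) (hb0 : 0 ≤ b0) (hb1 : 0 ≤ b1)
    (hT0 : 0 ≤ T0) (hT1 : 0 ≤ T1)
    (ha0A : a0 ≤ As) (ha1A : a1 ≤ As) (hb0B : b0 ≤ Bs) (hb1B : b1 ≤ Bs)
    (h10 : a0 * (Bs * T0) ≤ 1) (h11 : a1 * (Bs * T1) ≤ 1)
    (h20 : As * b0 * T0 ≤ 1) (h21 : As * b1 * T1 ≤ 1)
    (h30 : As * Bs * T0 ≤ 2) (h31 : As * Bs * T1 ≤ 2) :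
    ((1-p)*a0 + p*a1) * ((1-p)*b0 + p*b1) * ((1-p)*T0 + p*T1) ≤ 1 := by
  have hAs : 0 ≤ As := le_trans ha0 ha0A
  have hBs : 0 ≤ Bs := le_trans hb0 hb0B
  rcases eq_or_lt_of_le hAs with hA0 | hApos
  · -- As = 0 : a0 = a1 = 0
    have e0 : a0 = 0 := le_antisymm (by linarith) ha0
    have e1 : a1 = 0 := le_antisymm (by linarith) ha1
    rw [e0, e1]
    have : ((1:ℝ)-p)*0 + p*0 = 0 := by ring
    rw [this, zero_mul, zero_mul]
    norm_num
  rcases eq_or_lt_of_le hBs with hB0 | hBpos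
  · have e0 : b0 = 0 := le_antisymm (by linarith) hb0
    have e1 : b1 = 0 := le_antisymm (by linarith) hb1
    rw [e0, e1]
    have : ((1:ℝ)-p)*0 + p*0 = 0 := by ring
    rw [this, mul_zero, zero_mul]
    norm_num
  set u0 : ℝ := a0 / As with hu0
  set u1 : ℝ := a1 / As with hu1
  set v0 : ℝ := b0 / Bs with hv0
  set v1 : ℝ := b1 / Bs with hv1
  set s0 : ℝ := max u0 v0 with hs0
  set s1 : ℝ := max u1 v1 with hs1
  set t0 : ℝ := As * Bs * T0 with ht0
  set t1 : ℝ := As * Bs * T1 with ht1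
  have hu00 : 0 ≤ u0 := div_nonneg ha0 hAs
  have hu10 : 0 ≤ u1 := div_nonneg ha1 hAs
  have hv00 : 0 ≤ v0 := div_nonneg hb0 hBs
  have hv10 : 0 ≤ v1 := div_nonneg hb1 hBs
  have hu01 : u0 ≤ 1 := by rw [hu0, div_le_one hApos]; exact ha0A
  have hu11 : u1 ≤ 1 := by rw [hu1, div_le_one hApos]; exact ha1A
  have hv01 : v0 ≤ 1 := by rw [hv0, div_le_one hBpos]; exact hb0B
  have hv11 : v1 ≤ 1 := by rw [hv1, div_le_one hBpos]; exact hb1B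
  have hs00 : 0 ≤ s0 := le_trans hu00 (le_max_left _ _)
  have hs10 : 0 ≤ s1 := le_trans hu10 (le_max_left _ _)
  have hs01 : s0 ≤ 1 := max_le hu01 hv01
  have hs11 : s1 ≤ 1 := max_le hu11 hv11
  have ht00 : 0 ≤ t0 := by positivity
  have ht10 : 0 ≤ t1 := by positivity
  have hut0 : u0 * t0 ≤ 1 := by
    rw [hu0, ht0]
    calc a0 / As * (As * Bs * T0) = a0 * (Bs * T0) * (As / As) := by ring
      _ = a0 * (Bs * T0) := by rw [div_self (ne_of_gt hApos), mul_one]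
      _ ≤ 1 := h10
  have hut1 : u1 * t1 ≤ 1 := by
    rw [hu1, ht1]
    calc a1 / As * (As * Bs * T1) = a1 * (Bs * T1) * (As / As) := by ring
      _ = a1 * (Bs * T1) := by rw [div_self (ne_of_gt hApos), mul_one]
      _ ≤ 1 := h11
  have hvt0 : v0 * t0 ≤ 1 := by
    rw [hv0, ht0]
    calc b0 / Bs * (As * Bs * T0) = As * b0 * T0 * (Bs / Bs) := by ring
      _ = As * b0 * T0 := by rw [div_self (ne_of_gt hBpos), mul_one]
      _ ≤ 1 := h20
  have hvt1 : v1 * t1 ≤ 1 := by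
    rw [hv1, ht1]
    calc b1 / Bs * (As * Bs * T1) = As * b1 * T1 * (Bs / Bs) := by ring
      _ = As * b1 * T1 := by rw [div_self (ne_of_gt hBpos), mul_one]
      _ ≤ 1 := h21
  have hst0 : s0 * t0 ≤ 1 := by
    rcases max_choice u0 v0 with h | h <;> rw [hs0, h]
    · exact hut0
    · exact hvt0
  have hst1 : s1 * t1 ≤ 1 := by
    rcases max_choice u1 v1 with h | h <;> rw [hs1, h]
    · exact hut1
    · exact hvt1
  have hcore := tal_core p s0 s1 t0 t1 hp0 hp1 hs00 hs01 hs10 hs11 ht00 (by rw [ht0]; exact h30)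
    ht10 (by rw [ht1]; exact h31) hst0 hst1
  have ea0 : a0 = As * u0 := by rw [hu0]; field_simp
  have ea1 : a1 = As * u1 := by rw [hu1]; field_simp
  have eb0 : b0 = Bs * v0 := by rw [hv0]; field_simp
  have eb1 : b1 = Bs * v1 := by rw [hv1]; field_simp
  have hUV : ((1-p)*u0 + p*u1) * ((1-p)*v0 + p*v1) ≤ ((1-p)*s0 + p*s1)^2 := by
    have hU0 : 0 ≤ (1-p)*u0 + p*u1 := by
      have := mul_nonneg (sub_nonneg.2 hp1) hu00
      have := mul_nonneg hp0 hu10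
      linarith
    have hV0 : 0 ≤ (1-p)*v0 + p*v1 := by
      have := mul_nonneg (sub_nonneg.2 hp1) hv00
      have := mul_nonneg hp0 hv10
      linarith
    have hUS : (1-p)*u0 + p*u1 ≤ (1-p)*s0 + p*s1 := by
      have h1 := mul_le_mul_of_nonneg_left (le_max_left u0 v0) (sub_nonneg.2 hp1)
      have h2 := mul_le_mul_of_nonneg_left (le_max_left u1 v1) hp0
      rw [hs0, hs1]; linarith
    have hVS : (1-p)*v0 + p*v1 ≤ (1-p)*s0 + p*s1 := by
      have h1 := mul_le_mul_of_nonneg_left (le_max_right u0 v0) (sub_nonneg.2 hp1)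
      have h2 := mul_le_mul_of_nonneg_left (le_max_right u1 v1) hp0
      rw [hs0, hs1]; linarith
    calc ((1-p)*u0 + p*u1) * ((1-p)*v0 + p*v1)
        ≤ ((1-p)*s0 + p*s1) * ((1-p)*s0 + p*s1) :=
          mul_le_mul hUS hVS hV0 (le_trans hU0 hUS)
      _ = ((1-p)*s0 + p*s1)^2 := (sq _).symm
  calc ((1-p)*a0 + p*a1) * ((1-p)*b0 + p*b1) * ((1-p)*T0 + p*T1)
      = (((1-p)*u0 + p*u1) * ((1-p)*v0 + p*v1)) * ((1-p)*t0 + p*t1) := by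
        rw [ea0, ea1, eb0, eb1, ht0, ht1]; ring
    _ ≤ ((1-p)*s0 + p*s1)^2 * ((1-p)*t0 + p*t1) := by
        apply mul_le_mul_of_nonneg_right hUV
        have := mul_nonneg (sub_nonneg.2 hp1) ht00
        have := mul_nonneg hp0 ht10
        linarith
    _ ≤ 1 := hcore

lemma Gf_cons_le {n : ℕ} (e : Bool) (x : Fin n → Bool) (A B : Finset (Fin (n+1) → Bool))
    {C D : Finset (Fin n → Bool)} (hC : C.Nonempty) (hD : D.Nonempty) (κ : ℕ)
    (hlift : ∀ y ∈ C, ∀ z ∈ D, ∃ c d, Fin.cons c y ∈ A ∧ Fin.cons d z ∈ B ∧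
      (if e ≠ c ∧ e ≠ d then 1 else 0) ≤ κ) :
    Gf (Fin.cons e x) A B ≤ 2^κ * Gf x C D := by
  obtain ⟨y, hy, z, hz, hG⟩ := Gf_exists x hC hD
  obtain ⟨c, d, hcA, hdB, hκ⟩ := hlift y hy z hz
  calc Gf (Fin.cons e x) A B
      ≤ (2:ℝ) ^ cnt (Fin.cons e x) (Fin.cons c y) (Fin.cons d z) := Gf_le hcA hdB
    _ = 2 ^ ((if e ≠ c ∧ e ≠ d then 1 else 0) + cnt x y z) := by rw [cnt_cons]
    _ ≤ 2 ^ (κ + cnt x y z) := by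
        apply pow_le_pow_right₀ (by norm_num : (1:ℝ) ≤ 2); omega
    _ = 2^κ * Gf x C D := by rw [pow_add, hG]

lemma Gf_cons_le_secA {n : ℕ} (e : Bool) (x : Fin n → Bool)
    {A B : Finset (Fin (n+1) → Bool)} (hsec : (secF e A).Nonempty) (hB : B.Nonempty) :
    Gf (Fin.cons e x) A B ≤ Gf x (secF e A) (projF B) := by
  have h := Gf_cons_le e x A B hsec (projF_nonempty hB) 0 ?_
  · simpa using h
  · intro y hy z hz
    obtain ⟨d, hd⟩ := mem_projF.1 hz
    exact ⟨e, d, mem_secF.1 hy, hd, by simp⟩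

lemma Gf_cons_le_secB {n : ℕ} (e : Bool) (x : Fin n → Bool)
    {A B : Finset (Fin (n+1) → Bool)} (hA : A.Nonempty) (hsec : (secF e B).Nonempty) :
    Gf (Fin.cons e x) A B ≤ Gf x (projF A) (secF e B) := by
  have h := Gf_cons_le e x A B (projF_nonempty hA) hsec 0 ?_
  · simpa using h
  · intro y hy z hz
    obtain ⟨c, hc⟩ := mem_projF.1 hy
    exact ⟨c, e, hc, mem_secF.1 hz, by simp⟩

lemma Gf_cons_le_proj {n : ℕ} (e : Bool) (x : Fin n → Bool)
    {A B : Finset (Fin (n+1) → Bool)} (hA : A.Nonempty) (hB : B.Nonempty) :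
    Gf (Fin.cons e x) A B ≤ 2 * Gf x (projF A) (projF B) := by
  have h := Gf_cons_le e x A B (projF_nonempty hA) (projF_nonempty hB) 1 ?_
  · simpa using h
  · intro y hy z hz
    obtain ⟨c, hc⟩ := mem_projF.1 hy
    obtain ⟨d, hd⟩ := mem_projF.1 hz
    exact ⟨c, d, hc, hd, by split <;> norm_num⟩

theorem tal_main (σ : ℝ) (hσ0 : 0 ≤ σ) (hσ1 : σ ≤ 1) :
    ∀ (n : ℕ) (A B : Finset (Fin n → Bool)), A.Nonempty → B.Nonempty →
      PrF n σ A * PrF n σ B * (∑ x, cubeWeight n σ x * Gf x A B) ≤ 1 := by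
  intro n
  induction n with
  | zero =>
    intro A B hA hB
    obtain ⟨x0, hx0⟩ := hA
    have hss : ∀ u v : Fin 0 → Bool, u = v := fun u v => funext fun i => i.elim0
    have hAe : A = {x0} :=
      Finset.eq_singleton_iff_nonempty_unique_mem.mpr ⟨⟨x0, hx0⟩, fun x _ => hss x x0⟩
    have hBe : B = {x0} := by
      obtain ⟨z0, hz0⟩ := hB
      rw [hss z0 x0] at hz0
      exact Finset.eq_singleton_iff_nonempty_unique_mem.mpr ⟨⟨x0, hz0⟩, fun x _ => hss x x0⟩
    have huniv : (Finset.univ : Finset (Fin 0 → Bool)) = {x0} :=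
      Finset.eq_singleton_iff_nonempty_unique_mem.mpr
        ⟨⟨x0, Finset.mem_univ x0⟩, fun x _ => hss x x0⟩
    have hw : cubeWeight 0 σ x0 = 1 := by
      unfold cubeWeight
      simp
    have hcnt : cnt x0 x0 x0 = 0 := by
      unfold cnt
      simp
    have hG : Gf x0 {x0} {x0} = 1 := by
      obtain ⟨y, hy, z, hz, h⟩ := Gf_exists x0
        (Finset.singleton_nonempty _) (Finset.singleton_nonempty _)
      rw [Finset.mem_singleton] at hy hz
      subst hy hz
      rw [h, hcnt, pow_zero]
    rw [hAe, hBe, huniv, Finset.sum_singleton, PrF, Finset.sum_singleton, hw, hG]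
    norm_num
  | succ n ih =>
    intro A B hA hB
    have hw0 : ∀ y : Fin n → Bool, 0 ≤ cubeWeight n σ y := cubeWeight_nonneg hσ0 hσ1
    -- sums
    set S : Finset (Fin n → Bool) → Finset (Fin n → Bool) → ℝ :=
      fun C D => ∑ y, cubeWeight n σ y * Gf y C D with hSdef
    set T : Bool → ℝ := fun e => ∑ y, cubeWeight n σ y * Gf (Fin.cons e y) A B with hTdef
    have hTsum : ∀ (e : Bool) (C D : Finset (Fin n → Bool)) (c : ℝ), 0 ≤ c →
        (∀ y : Fin n → Bool, Gf (Fin.cons e y) A B ≤ c * Gf y C D) → T e ≤ c * S C D := by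
      intro e C D c hc hpt
      rw [hTdef, hSdef, Finset.mul_sum]
      apply Finset.sum_le_sum
      intro y _
      calc cubeWeight n σ y * Gf (Fin.cons e y) A B
          ≤ cubeWeight n σ y * (c * Gf y C D) := mul_le_mul_of_nonneg_left (hpt y) (hw0 y)
        _ = c * (cubeWeight n σ y * Gf y C D) := by ring
    have hT0 : ∀ e, 0 ≤ T e := by
      intro e
      exact Finset.sum_nonneg fun y _ => mul_nonneg (hw0 y) (Gf_nonneg _ _ _)
    have hS0 : ∀ C D, 0 ≤ S C D :=
      fun C D => Finset.sum_nonneg fun y _ => mul_nonneg (hw0 y) (Gf_nonneg _ _ _)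
    -- masses
    set a : Bool → ℝ := fun e => PrF n σ (secF e A) with hadef
    set b : Bool → ℝ := fun e => PrF n σ (secF e B) with hbdef
    set As : ℝ := PrF n σ (projF A) with hAsdef
    set Bs : ℝ := PrF n σ (projF B) with hBsdef
    have ha0 : ∀ e, 0 ≤ a e := fun e => PrF_nonneg hσ0 hσ1 _
    have hb0 : ∀ e, 0 ≤ b e := fun e => PrF_nonneg hσ0 hσ1 _
    have haA : ∀ e, a e ≤ As := fun e => PrF_mono hσ0 hσ1 (secF_subset_projF e A)
    have hbB : ∀ e, b e ≤ Bs := fun e => PrF_mono hσ0 hσ1 (secF_subset_projF e B)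
    -- bound 1 : a e * (Bs * T e) ≤ 1
    have h1 : ∀ e, a e * (Bs * T e) ≤ 1 := by
      intro e
      by_cases hsec : (secF e A).Nonempty
      · have hTle : T e ≤ 1 * S (secF e A) (projF B) :=
          hTsum e _ _ 1 one_pos.le (fun y => by rw [one_mul]; exact Gf_cons_le_secA e y hsec hB)
        rw [one_mul] at hTle
        have hih := ih (secF e A) (projF B) hsec (projF_nonempty hB)
        calc a e * (Bs * T e) ≤ a e * (Bs * S (secF e A) (projF B)) := by
              apply mul_le_mul_of_nonneg_left _ (ha0 e)
              exact mul_le_mul_of_nonneg_left hTle (PrF_nonneg hσ0 hσ1 _)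
          _ = PrF n σ (secF e A) * PrF n σ (projF B) * S (secF e A) (projF B) := by
              rw [hadef, hBsdef]; ring
          _ ≤ 1 := hih
      · have : a e = 0 := by
          simp only [hadef]
          rw [Finset.not_nonempty_iff_eq_empty.1 hsec]
          simp [PrF]
        rw [this, zero_mul]
        norm_num
    have h2 : ∀ e, As * b e * T e ≤ 1 := by
      intro e
      by_cases hsec : (secF e B).Nonempty
      · have hTle : T e ≤ 1 * S (projF A) (secF e B) :=
          hTsum e _ _ 1 one_pos.le (fun y => by rw [one_mul]; exact Gf_cons_le_secB e y hA hsec)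
        rw [one_mul] at hTle
        have hih := ih (projF A) (secF e B) (projF_nonempty hA) hsec
        calc As * b e * T e ≤ As * b e * S (projF A) (secF e B) := by
              apply mul_le_mul_of_nonneg_left hTle (mul_nonneg (PrF_nonneg hσ0 hσ1 _) (hb0 e))
          _ = PrF n σ (projF A) * PrF n σ (secF e B) * S (projF A) (secF e B) := by
              rw [hbdef, hAsdef]
          _ ≤ 1 := hih
      · have : b e = 0 := by
          simp only [hbdef]
          rw [Finset.not_nonempty_iff_eq_empty.1 hsec]
          simp [PrF]
        rw [this, mul_zero, zero_mul]
        norm_num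
    have h3 : ∀ e, As * Bs * T e ≤ 2 := by
      intro e
      have hTle : T e ≤ 2 * S (projF A) (projF B) :=
        hTsum e _ _ 2 (by norm_num) (fun y => Gf_cons_le_proj e y hA hB)
      have hih := ih (projF A) (projF B) (projF_nonempty hA) (projF_nonempty hB)
      calc As * Bs * T e ≤ As * Bs * (2 * S (projF A) (projF B)) := by
            apply mul_le_mul_of_nonneg_left hTle
              (mul_nonneg (PrF_nonneg hσ0 hσ1 _) (PrF_nonneg hσ0 hσ1 _))
        _ = 2 * (PrF n σ (projF A) * PrF n σ (projF B) * S (projF A) (projF B)) := by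
            rw [hAsdef, hBsdef]; ring
        _ ≤ 2 * 1 := by linarith [hih]
        _ = 2 := by norm_num
    -- split the sums
    have hPrA : PrF (n+1) σ A = (1-σ) * a false + σ * a true := PrF_succ σ A
    have hPrB : PrF (n+1) σ B = (1-σ) * b false + σ * b true := PrF_succ σ B
    have hsum : (∑ x, cubeWeight (n+1) σ x * Gf x A B) = (1-σ) * T false + σ * T true := by
      rw [sum_cube_succ (fun x => cubeWeight (n+1) σ x * Gf x A B)]
      have h : ∀ e : Bool,
          (∑ y : Fin n → Bool, cubeWeight (n+1) σ (Fin.cons e y) * Gf (Fin.cons e y) A B)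
            = (if e then σ else 1-σ) * T e := by
        intro e
        rw [hTdef, Finset.mul_sum]
        refine Finset.sum_congr rfl fun y _ => ?_
        rw [cubeWeight_cons]
        ring
      rw [h false, h true]
      simp
    rw [hPrA, hPrB, hsum]
    exact tal_assemble σ (a false) (a true) (b false) (b true) As Bs (T false) (T true)
      hσ0 hσ1 (ha0 false) (ha0 true) (hb0 false) (hb0 true) (hT0 false) (hT0 true)
      (haA false) (haA true) (hbB false) (hbB true)
      (h1 false) (h1 true) (h2 false) (h2 true) (h3 false) (h3 true)

/-- **Talagrand's inequality** (Theorem 2.3): for every `σ ∈ [0,1]`, `A ⊆ {0,1}^n` and real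
`k ≥ 0`, we have `π_σ^n(A)² · Pr_{x∼π_σ^n}[h₂(x;A) ≥ k] ≤ 2^{-k}`. -/
theorem talagrand_two_point (σ : ℝ) (hσ0 : 0 ≤ σ) (hσ1 : σ ≤ 1) (n : ℕ)
    (A : Set (Fin n → Bool)) (k : ℝ) (hk : 0 ≤ k) :
    (cubePr n σ (fun x => x ∈ A)) ^ 2 *
        cubePr n σ (fun x => ENNReal.ofReal k ≤ h2 x A) ≤
      (2 : ℝ) ^ (-k) := by
  classical
  have hrpow0 : (0:ℝ) ≤ (2:ℝ) ^ (-k) := Real.rpow_nonneg (by norm_num) _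
  set A' : Finset (Fin n → Bool) := Finset.univ.filter (· ∈ A) with hA'
  have hmemA' : ∀ y, y ∈ A' ↔ y ∈ A := by
    intro y
    rw [hA', Finset.mem_filter]
    simp
  have hPrA : cubePr n σ (fun x => x ∈ A) = PrF n σ A' := by
    rw [cubePr, PrF, hA', Finset.sum_filter]
  by_cases hA'ne : A'.Nonempty
  · -- Markov
    have hmark : cubePr n σ (fun x => ENNReal.ofReal k ≤ h2 x A)
        ≤ (2:ℝ)^(-k) * ∑ x, cubeWeight n σ x * Gf x A' A' := by
      rw [cubePr, Finset.mul_sum]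
      apply Finset.sum_le_sum
      intro x _
      by_cases hx : ENNReal.ofReal k ≤ h2 x A
      · rw [if_pos hx]
        obtain ⟨y, hy, z, hz, hG⟩ := Gf_exists x hA'ne hA'ne
        have hyA : y ∈ A := (hmemA' y).1 hy
        have hzA : z ∈ A := (hmemA' z).1 hz
        have hh2le : h2 x A ≤ ((cnt x y z : ℕ) : ENNReal) := by
          rw [h2]
          refine iInf_le_of_le y (iInf_le_of_le hyA (iInf_le_of_le z (iInf_le_of_le hzA ?_)))
          rw [cnt]
        have hkN : k ≤ (cnt x y z : ℝ) := by
          have h := le_trans hx hh2le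
          rw [← ENNReal.ofReal_natCast, ENNReal.ofReal_le_ofReal_iff (by positivity)] at h
          exact h
        have h2N : (1:ℝ) ≤ (2:ℝ)^(-k) * 2 ^ cnt x y z := by
          have he : (2:ℝ)^(-k) * (2:ℝ) ^ cnt x y z = (2:ℝ) ^ ((cnt x y z : ℝ) - k) := by
            rw [← Real.rpow_natCast 2 (cnt x y z), ← Real.rpow_add (by norm_num : (0:ℝ) < 2)]
            ring_nf
          rw [he]
          calc (1:ℝ) = (2:ℝ) ^ (0:ℝ) := (Real.rpow_zero 2).symm
            _ ≤ (2:ℝ) ^ ((cnt x y z : ℝ) - k) :=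
                Real.rpow_le_rpow_of_exponent_le one_le_two (by linarith)
        calc cubeWeight n σ x = 1 * cubeWeight n σ x := (one_mul _).symm
          _ ≤ ((2:ℝ)^(-k) * 2 ^ cnt x y z) * cubeWeight n σ x :=
              mul_le_mul_of_nonneg_right h2N (cubeWeight_nonneg hσ0 hσ1 x)
          _ = (2:ℝ)^(-k) * (cubeWeight n σ x * Gf x A' A') := by rw [hG]; ring
      · rw [if_neg hx]
        exact mul_nonneg hrpow0 (mul_nonneg (cubeWeight_nonneg hσ0 hσ1 x) (Gf_nonneg _ _ _))
    have hmain := tal_main σ hσ0 hσ1 n A' A' hA'ne hA'ne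
    have hPrA0 : 0 ≤ PrF n σ A' := PrF_nonneg hσ0 hσ1 _
    calc (cubePr n σ (fun x => x ∈ A)) ^ 2 * cubePr n σ (fun x => ENNReal.ofReal k ≤ h2 x A)
        = PrF n σ A' ^ 2 * cubePr n σ (fun x => ENNReal.ofReal k ≤ h2 x A) := by rw [hPrA]
      _ ≤ PrF n σ A' ^ 2 * ((2:ℝ)^(-k) * ∑ x, cubeWeight n σ x * Gf x A' A') :=
          mul_le_mul_of_nonneg_left hmark (sq_nonneg _)
      _ = (2:ℝ)^(-k) * (PrF n σ A' * PrF n σ A' * ∑ x, cubeWeight n σ x * Gf x A' A') := by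
          ring
      _ ≤ (2:ℝ)^(-k) * 1 := mul_le_mul_of_nonneg_left hmain hrpow0
      _ = (2:ℝ)^(-k) := mul_one _
  · -- A' empty : probability of A is zero
    have hzero : cubePr n σ (fun x => x ∈ A) = 0 := by
      rw [hPrA, PrF, Finset.not_nonempty_iff_eq_empty.1 hA'ne, Finset.sum_empty]
    rw [hzero]
    simpa using hrpow0
end

section
/- Let f : {0,1}^n → ℝ₊ be a sub-additive function with f(1,…,1) = r, and let k ≥ 1 be an integer. Then Pr_{x~π_{1/k}^n}[f(x) ≥ r/k] ≥ 1/k. -/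
/-- `f` is monotone w.r.t. the partial order on `{0,1}^n` given by inclusion of supports. -/
def CubeMonotone {n : ℕ} (f : (Fin n → Bool) → ℝ) : Prop :=
  ∀ x y : Fin n → Bool, (∀ i, x i = true → y i = true) → f x ≤ f y

/-- `f` is sub-additive: `f(x+y) ≤ f(x) + f(y)` whenever `x, y` have disjoint supports. -/
def CubeSubadditive {n : ℕ} (f : (Fin n → Bool) → ℝ) : Prop :=
  ∀ x y : Fin n → Bool, (∀ i, ¬(x i = true ∧ y i = true)) →
    f (fun i => x i || y i) ≤ f x + f y

/-- `f` is 1-Lipschitz w.r.t. the Hamming distance on `{0,1}^n`. -/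
def CubeLipschitz {n : ℕ} (f : (Fin n → Bool) → ℝ) : Prop :=
  ∀ x y : Fin n → Bool,
    |f x - f y| ≤ ((Finset.univ.filter fun i : Fin n => x i ≠ y i).card : ℝ)


open Finset Classical

section Aux
variable {n k : ℕ}

/-- The `j`-th part of a coloring. -/
def cbPart (c : Fin n → Fin k) (j : Fin k) : Fin n → Bool := fun i => decide (c i = j)

lemma cbFiber_card (j : Fin k) (x : Fin n → Bool) :
    (Finset.univ.filter fun c : Fin n → Fin k => cbPart c j = x).card
      = ∏ i, (if x i then 1 else k - 1) := by
  have hset : (Finset.univ.filter fun c : Fin n → Fin k => cbPart c j = x)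
      = Fintype.piFinset (fun i => if x i then {j} else {j}ᶜ) := by
    ext c
    simp only [Finset.mem_filter, Finset.mem_univ, true_and, Fintype.mem_piFinset,
      funext_iff, cbPart]
    refine forall_congr' fun i => ?_
    cases hx : x i <;> simp
  rw [hset, Fintype.card_piFinset]
  refine Finset.prod_congr rfl fun i _ => ?_
  cases hx : x i <;> simp [Finset.card_compl]

lemma cbWeight_eq (hk : 1 ≤ k) (x : Fin n → Bool) :
    cubeWeight n (1 / k) x
      = (∏ i, (if x i then (1:ℝ) else (k - 1))) * (1 / k) ^ n := by
  have hk0 : (k:ℝ) ≠ 0 := by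
    have : (0:ℝ) < k := by exact_mod_cast hk
    linarith
  unfold cubeWeight
  rw [← Fin.prod_const n ((1:ℝ)/↑k), ← Finset.prod_mul_distrib]
  refine Finset.prod_congr rfl fun i _ => ?_
  cases hx : x i <;> simp <;> field_simp

/-- Pushforward of the uniform measure on colorings under `cbPart · j` is `π_{1/k}`. -/
lemma cbSum_part (hk : 1 ≤ k) (j : Fin k) (h : (Fin n → Bool) → ℝ) :
    ∑ c : Fin n → Fin k, ((1:ℝ)/k)^n * h (cbPart c j)
      = ∑ x : Fin n → Bool, cubeWeight n (1/k) x * h x := by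
  rw [← Finset.sum_fiberwise Finset.univ (fun c : Fin n → Fin k => cbPart c j)
    (fun c => ((1:ℝ)/k)^n * h (cbPart c j))]
  refine Finset.sum_congr rfl fun x _ => ?_
  have h1 : ∀ c ∈ Finset.univ.filter fun c : Fin n → Fin k => cbPart c j = x,
      ((1:ℝ)/k)^n * h (cbPart c j) = ((1:ℝ)/k)^n * h x := by
    intro c hc
    rw [(Finset.mem_filter.1 hc).2]
  rw [Finset.sum_congr rfl h1, Finset.sum_const, cbFiber_card, cbWeight_eq hk,
    nsmul_eq_mul]
  have hc : ((∏ i, (if x i then 1 else k - 1) : ℕ) : ℝ)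
      = ∏ i, (if x i then (1:ℝ) else (k - 1)) := by
    push_cast
    refine Finset.prod_congr rfl fun i _ => ?_
    cases hx : x i <;> simp [Nat.cast_sub hk]
  rw [hc]; ring

lemma cbSubadd_sum {f : (Fin n → Bool) → ℝ} (hsub : CubeSubadditive f)
    (c : Fin n → Fin k) (s : Finset (Fin k)) (hs : s.Nonempty) :
    f (fun i => decide (c i ∈ s)) ≤ ∑ j ∈ s, f (cbPart c j) := by
  induction hs using Finset.Nonempty.cons_induction with
  | singleton a =>
    rw [Finset.sum_singleton]
    refine le_of_eq (congrArg f ?_)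
    funext i
    simp [cbPart]
  | cons a s ha hs ih =>
    have hfun : (fun i => decide (c i ∈ Finset.cons a s ha))
        = fun i => cbPart c a i || decide (c i ∈ s) := by
      funext i
      simp [cbPart, Finset.mem_cons, Bool.decide_or]
    rw [hfun, Finset.sum_cons]
    have hdisj : ∀ i, ¬(cbPart c a i = true ∧ decide (c i ∈ s) = true) := by
      intro i hi
      simp only [cbPart, decide_eq_true_eq] at hi
      exact ha (hi.1 ▸ hi.2)
    calc f (fun i => cbPart c a i || decide (c i ∈ s))
        ≤ f (cbPart c a) + f (fun i => decide (c i ∈ s)) := hsub _ _ hdisj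
      _ ≤ f (cbPart c a) + ∑ j ∈ s, f (cbPart c j) := by linarith

end Aux


/-- **Coupling bound** (inequality (2.3)): if `f : {0,1}^n → ℝ₊` is sub-additive with
`f(1,…,1) = r`, then for every integer `k ≥ 1` we have
`Pr_{x∼π_{1/k}^n}[f(x) ≥ r/k] ≥ 1/k`. -/
theorem coupling_bound (n : ℕ) (r : ℝ) (k : ℕ) (hk : 1 ≤ k)
    (f : (Fin n → Bool) → ℝ)
    (hnn : ∀ x, 0 ≤ f x)
    (hsub : CubeSubadditive f)
    (h1 : f (fun _ => true) = r) :
    (1 : ℝ) / k ≤ cubePr n (1 / k) (fun x => r / k ≤ f x) := by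
  have hk0 : (0:ℝ) < k := by exact_mod_cast hk
  have hkne : (k:ℝ) ≠ 0 := ne_of_gt hk0
  set h : (Fin n → Bool) → ℝ := fun x => if r / k ≤ f x then 1 else 0 with hh
  -- each coloring has a good part
  have hgood : ∀ c : Fin n → Fin k, ∃ j : Fin k, r / k ≤ f (cbPart c j) := by
    intro c
    by_contra hcon
    push_neg at hcon
    have huniv : (Finset.univ : Finset (Fin k)).Nonempty := by
      refine ⟨⟨0, hk⟩, Finset.mem_univ _⟩
    have hle : r ≤ ∑ j : Fin k, f (cbPart c j) := by
      have := cbSubadd_sum hsub c Finset.univ huniv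
      simpa [h1] using this
    have hlt : ∑ j : Fin k, f (cbPart c j) < ∑ _j : Fin k, r / k :=
      Finset.sum_lt_sum_of_nonempty huniv fun j _ => hcon j
    rw [Finset.sum_const, Finset.card_univ, Fintype.card_fin, nsmul_eq_mul] at hlt
    rw [mul_div_cancel₀ r hkne] at hlt
    linarith
  have hI : ∀ c : Fin n → Fin k, (1:ℝ) ≤ ∑ j : Fin k, h (cbPart c j) := by
    intro c
    obtain ⟨j, hj⟩ := hgood c
    have : h (cbPart c j) = 1 := by simp [hh, hj]
    calc (1:ℝ) = h (cbPart c j) := this.symm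
      _ ≤ ∑ j : Fin k, h (cbPart c j) := by
        refine Finset.single_le_sum (f := fun j => h (cbPart c j)) (fun j _ => ?_)
          (Finset.mem_univ j)
        simp only [hh]; positivity
  have hPr : cubePr n (1/k) (fun x => r / k ≤ f x)
      = ∑ x : Fin n → Bool, cubeWeight n (1/k) x * h x := by
    unfold cubePr
    refine Finset.sum_congr rfl fun x _ => ?_
    simp only [hh]
    split_ifs <;> simp
  have hkey : (1:ℝ) ≤ (k:ℝ) * cubePr n (1/k) (fun x => r / k ≤ f x) := by
    have hsum : (k:ℝ) * cubePr n (1/k) (fun x => r / k ≤ f x)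
        = ∑ c : Fin n → Fin k, ((1:ℝ)/k)^n * ∑ j : Fin k, h (cbPart c j) := by
      rw [hPr]
      have : ∀ j : Fin k, ∑ x : Fin n → Bool, cubeWeight n (1/k) x * h x
          = ∑ c : Fin n → Fin k, ((1:ℝ)/k)^n * h (cbPart c j) :=
        fun j => (cbSum_part hk j h).symm
      calc (k:ℝ) * ∑ x : Fin n → Bool, cubeWeight n (1/k) x * h x
          = ∑ _j : Fin k, ∑ x : Fin n → Bool, cubeWeight n (1/k) x * h x := by
            rw [Finset.sum_const, Finset.card_univ, Fintype.card_fin, nsmul_eq_mul]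
        _ = ∑ j : Fin k, ∑ c : Fin n → Fin k, ((1:ℝ)/k)^n * h (cbPart c j) := by
            exact Finset.sum_congr rfl fun j _ => this j
        _ = ∑ c : Fin n → Fin k, ∑ j : Fin k, ((1:ℝ)/k)^n * h (cbPart c j) :=
            Finset.sum_comm
        _ = ∑ c : Fin n → Fin k, ((1:ℝ)/k)^n * ∑ j : Fin k, h (cbPart c j) := by
            exact Finset.sum_congr rfl fun c _ => (Finset.mul_sum _ _ _).symm
    rw [hsum]
    have hlb : ∑ c : Fin n → Fin k, ((1:ℝ)/k)^n * 1
        ≤ ∑ c : Fin n → Fin k, ((1:ℝ)/k)^n * ∑ j : Fin k, h (cbPart c j) := by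
      refine Finset.sum_le_sum fun c _ => ?_
      have : (0:ℝ) ≤ ((1:ℝ)/k)^n := by positivity
      exact mul_le_mul_of_nonneg_left (hI c) this
    have htotal : ∑ _c : Fin n → Fin k, ((1:ℝ)/k)^n * 1 = 1 := by
      rw [Finset.sum_const, Finset.card_univ, Fintype.card_fun, nsmul_eq_mul]
      simp only [mul_one, Fintype.card_fin]
      rw [one_div, inv_pow, ← Nat.cast_pow]
      exact mul_inv_cancel₀ (by positivity)
    linarith
  rw [div_le_iff₀ hk0]
  linarith [hkey]
end

section
/- For every σ ∈ (0,1] and every integer d ≥ 1 there exists a constant c(σ,d) > 0 such that the following holds. Let n, k be positive integers, let R be a commutative ring, and let rank : (R[x₁,…,x_n]_{≤d})^k → ℝ₊ be a function that is symmetric (rank(φ) = rank(−φ)), sub-additive (rank(φ+γ) ≤ rank(φ)+rank(γ)), and monotone under restrictions (rank(φ_{|I}) ≤ rank(φ) for all I ⊆ [n]). Then for every φ ∈ (R[x₁,…,x_n]_{≤d})^k: E_{J~[n]_σ}[rank(φ_{|J})] ≥ c(σ,d)·rank(φ). -/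
/-- A `k`-tuple of polynomials in variables `x₁,…,x_n` over a commutative ring `R`. -/
abbrev PolyTuple (R : Type*) [CommSemiring R] (n k : ℕ) := Fin k → MvPolynomial (Fin n) R

/-- `φ` is an element of `(R[x₁,…,x_n]_{≤d})^k`: each component has total degree at most `d`. -/
def DegLE {R : Type*} [CommSemiring R] {n k : ℕ} (d : ℕ) (φ : PolyTuple R n k) : Prop :=
  ∀ j, (φ j).totalDegree ≤ d

/-- The restriction `φ_{|I}`: substitute `0` for every variable `x_i` with `i ∉ I`. -/
noncomputable def prestrict {R : Type*} [CommSemiring R] {n k : ℕ} (I : Finset (Fin n))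
    (φ : PolyTuple R n k) : PolyTuple R n k :=
  fun j => MvPolynomial.aeval (fun i => if i ∈ I then MvPolynomial.X i else 0) (φ j)

open Finset MvPolynomial

variable {R : Type*} [CommSemiring R] {n : ℕ}

lemma restr_monomial (I : Finset (Fin n)) (T : (Fin n) →₀ ℕ) (a : R) :
    MvPolynomial.aeval (fun i => if i ∈ I then MvPolynomial.X i else 0) (monomial T a)
      = if T.support ⊆ I then monomial T a else (0 : MvPolynomial (Fin n) R) := by
  rw [aeval_monomial]
  by_cases h : T.support ⊆ I
  · rw [if_pos h]
    rw [monomial_eq]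
    congr 1
    rw [Finsupp.prod, Finsupp.prod]
    apply Finset.prod_congr rfl
    intro i hi
    rw [if_pos (h hi)]
  · rw [if_neg h]
    obtain ⟨i, hi, hiI⟩ := Finset.not_subset.mp h
    rw [Finsupp.prod]
    rw [Finset.prod_eq_zero hi]
    · simp
    · rw [if_neg hiI]
      exact zero_pow (Finsupp.mem_support_iff.mp hi)

lemma coeff_restr (I : Finset (Fin n)) (p : MvPolynomial (Fin n) R) (T : (Fin n) →₀ ℕ) :
    (MvPolynomial.aeval (fun i => if i ∈ I then MvPolynomial.X i else 0) p).coeff T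
      = if T.support ⊆ I then p.coeff T else 0 := by
  induction p using MvPolynomial.induction_on' with
  | monomial u a =>
      rw [restr_monomial]
      split <;> rename_i hu
      · rw [coeff_monomial]
        split <;> rename_i he
        · subst he; rw [if_pos hu]
        · split
          · rfl
          · rfl
      · rw [coeff_zero, coeff_monomial]
        by_cases he : u = T
        · subst he; simp [hu]
        · rw [if_neg he]; split <;> rfl
  | add p q hp hq =>
      rw [map_add, coeff_add, coeff_add, hp, hq]
      split <;> simp

section Restr

variable {k : ℕ}

lemma coeff_prestrict (I : Finset (Fin n)) (φ : PolyTuple R n k) (j : Fin k) (T : (Fin n) →₀ ℕ) :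
    (prestrict I φ j).coeff T = if T.support ⊆ I then (φ j).coeff T else 0 :=
  coeff_restr I (φ j) T

lemma degLE_prestrict {d : ℕ} (I : Finset (Fin n)) {φ : PolyTuple R n k} (h : DegLE d φ) :
    DegLE d (prestrict I φ) := by
  intro j
  refine le_trans (Finset.sup_mono ?_) (h j)
  intro T hT
  rw [MvPolynomial.mem_support_iff] at hT ⊢
  rw [coeff_prestrict] at hT
  intro h0
  rw [h0] at hT
  simp at hT

lemma prestrict_prestrict {A B : Finset (Fin n)} (hAB : A ⊆ B) (φ : PolyTuple R n k) :
    prestrict A (prestrict B φ) = prestrict A φ := by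
  funext j
  apply MvPolynomial.ext
  intro T
  show (prestrict A (prestrict B φ) j).coeff T = _
  rw [coeff_prestrict, coeff_prestrict, coeff_prestrict]
  by_cases h : T.support ⊆ A
  · rw [if_pos h, if_pos h, if_pos (h.trans hAB)]
  · rw [if_neg h, if_neg h]

lemma prestrict_univ (φ : PolyTuple R n k) : prestrict Finset.univ φ = φ := by
  funext j
  apply MvPolynomial.ext
  intro T
  rw [coeff_prestrict, if_pos (Finset.subset_univ _)]

end Restr

section DegLEL

variable {k d : ℕ}

lemma degLE_zero : DegLE d (0 : PolyTuple R n k) := by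
  intro j
  show (0 : MvPolynomial (Fin n) R).totalDegree ≤ d
  simp

lemma degLE_add {φ γ : PolyTuple R n k} (hφ : DegLE d φ) (hγ : DegLE d γ) :
    DegLE d (φ + γ) := by
  intro j
  exact le_trans (MvPolynomial.totalDegree_add _ _) (max_le (hφ j) (hγ j))

lemma degLE_sum {ι : Type*} (s : Finset ι) (θ : ι → PolyTuple R n k)
    (h : ∀ i ∈ s, DegLE d (θ i)) : DegLE d (∑ i ∈ s, θ i) := by
  classical
  induction s using Finset.induction_on with
  | empty => simpa using (degLE_zero (R := R) (n := n) (k := k) (d := d))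
  | insert a s hnot ih =>
      rw [Finset.sum_insert hnot]
      exact degLE_add (h a (Finset.mem_insert_self a s))
        (ih fun i hi => h i (Finset.mem_insert_of_mem hi))

lemma degLE_nsmul {φ : PolyTuple R n k} (hφ : DegLE d φ) (m : ℕ) : DegLE d (m • φ) := by
  induction m with
  | zero => simpa using (degLE_zero (R := R) (n := n) (k := k) (d := d))
  | succ m ih => rw [succ_nsmul]; exact degLE_add ih hφ

end DegLEL

section RankLemmas

variable {R : Type*} [CommRing R] {n k d : ℕ}

lemma degLE_neg {φ : PolyTuple R n k} (hφ : DegLE d φ) : DegLE d (-φ) := by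
  intro j
  show ((-φ) j).totalDegree ≤ d
  have : (-φ) j = -(φ j) := rfl
  rw [this, MvPolynomial.totalDegree_neg]
  exact hφ j

lemma degLE_zsmul {φ : PolyTuple R n k} (hφ : DegLE d φ) (c : ℤ) : DegLE d (c • φ) := by
  rcases Int.natAbs_eq c with h | h
  · rw [h, natCast_zsmul]; exact degLE_nsmul hφ _
  · rw [h, neg_zsmul, natCast_zsmul]; exact degLE_neg (degLE_nsmul hφ _)

variable (rank : PolyTuple R n k → ℝ)

lemma rank_nsmul_le (h0 : rank 0 = 0)
    (hadd : ∀ φ γ : PolyTuple R n k, DegLE d φ → DegLE d γ → rank (φ + γ) ≤ rank φ + rank γ)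
    {ψ : PolyTuple R n k} (hψ : DegLE d ψ) (m : ℕ) :
    rank (m • ψ) ≤ m * rank ψ := by
  induction m with
  | zero => simp [h0]
  | succ m ih =>
      rw [succ_nsmul]
      calc rank (m • ψ + ψ) ≤ rank (m • ψ) + rank ψ := hadd _ _ (degLE_nsmul hψ m) hψ
        _ ≤ m * rank ψ + rank ψ := by linarith
        _ = (m + 1 : ℕ) * rank ψ := by push_cast; ring

lemma rank_zsmul_le (h0 : rank 0 = 0)
    (hsym : ∀ φ, DegLE d φ → rank (-φ) = rank φ)
    (hadd : ∀ φ γ : PolyTuple R n k, DegLE d φ → DegLE d γ → rank (φ + γ) ≤ rank φ + rank γ)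
    {ψ : PolyTuple R n k} (hψ : DegLE d ψ) (c : ℤ) :
    rank (c • ψ) ≤ (c.natAbs : ℝ) * rank ψ := by
  rcases Int.natAbs_eq c with h | h
  · rw [h, natCast_zsmul]
    exact rank_nsmul_le rank h0 hadd hψ _
  · rw [h, neg_zsmul, natCast_zsmul, hsym _ (degLE_nsmul hψ _), Int.natAbs_neg,
      Int.natAbs_natCast]
    exact rank_nsmul_le rank h0 hadd hψ _

lemma rank_sum_le (h0 : rank 0 = 0)
    (hadd : ∀ φ γ : PolyTuple R n k, DegLE d φ → DegLE d γ → rank (φ + γ) ≤ rank φ + rank γ)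
    {ι : Type*} (s : Finset ι) (θ : ι → PolyTuple R n k)
    (h : ∀ i ∈ s, DegLE d (θ i)) :
    rank (∑ i ∈ s, θ i) ≤ ∑ i ∈ s, rank (θ i) := by
  classical
  induction s using Finset.induction_on with
  | empty => simp [h0]
  | insert a s hnot ih =>
      rw [Finset.sum_insert hnot, Finset.sum_insert hnot]
      have hs : ∀ i ∈ s, DegLE d (θ i) := fun i hi => h i (Finset.mem_insert_of_mem hi)
      calc rank (θ a + ∑ i ∈ s, θ i)
          ≤ rank (θ a) + rank (∑ i ∈ s, θ i) :=
            hadd _ _ (h a (Finset.mem_insert_self a s)) (degLE_sum s θ hs)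
        _ ≤ rank (θ a) + ∑ i ∈ s, rank (θ i) := by linarith [ih hs]

end RankLemmas

section Combinatorics

variable {α : Type*} [Fintype α] [DecidableEq α]

lemma sum_supersets {M : Type*} [AddCommMonoid M] (P : Finset α) (f : Finset α → M) :
    ∑ S : Finset α, (if P ⊆ S then f S else 0) = ∑ B ∈ Pᶜ.powerset, f (P ∪ B) := by
  rw [← Finset.sum_filter]
  apply Finset.sum_nbij' (i := fun S => S \ P) (j := fun B => P ∪ B)
  · intro S hS
    simp only [Finset.mem_filter] at hS
    rw [Finset.mem_powerset]
    intro x hx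
    rw [Finset.mem_compl]
    exact (Finset.mem_sdiff.mp hx).2
  · intro B hB
    simp only [Finset.mem_filter]
    exact ⟨Finset.mem_univ _, Finset.subset_union_left⟩
  · intro S hS
    simp only [Finset.mem_filter] at hS
    exact Finset.union_sdiff_of_subset hS.2
  · intro B hB
    rw [Finset.mem_powerset] at hB
    apply Finset.union_sdiff_cancel_left
    refine Finset.disjoint_left.mpr ?_
    intro x hxP hxB
    exact Finset.mem_compl.mp (hB hxB) hxP
  · intro S hS
    simp only [Finset.mem_filter] at hS
    rw [Finset.union_sdiff_of_subset hS.2]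

lemma sum_powerset_pairs {M : Type*} [AddCommMonoid M] (F : Finset α → Finset α → M) :
    ∑ J : Finset α, ∑ A ∈ J.powerset, F A J
      = ∑ A : Finset α, ∑ B ∈ Aᶜ.powerset, F A (A ∪ B) := by
  have h1 : ∀ J : Finset α, ∑ A ∈ J.powerset, F A J
      = ∑ A : Finset α, (if A ⊆ J then F A J else 0) := by
    intro J
    rw [← Finset.sum_filter]
    apply Finset.sum_congr _ (fun _ _ => rfl)
    ext A
    simp [Finset.mem_powerset]
  simp_rw [h1]
  rw [Finset.sum_comm]
  exact Finset.sum_congr rfl fun A _ => sum_supersets A (fun J => F A J)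

omit [Fintype α] in
lemma sum_subsets_pow {x y : ℝ} (s : Finset α) :
    ∑ A ∈ s.powerset, x ^ A.card * y ^ (s.card - A.card) = (x + y) ^ s.card := by
  classical
  rw [← Finset.prod_const, Finset.prod_add]
  apply Finset.sum_congr rfl
  intro t ht
  rw [Finset.mem_powerset] at ht
  rw [Finset.prod_const, Finset.prod_const, Finset.card_sdiff_of_subset ht]

end Combinatorics

section Coef

def coefAux (M : ℕ) : ℕ → ℤ
  | t => 1 - ∑ u ∈ (Finset.range t).attach, ((M + t).choose (t - ↑u) : ℤ) * coefAux M ↑u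
decreasing_by exact Finset.mem_range.mp u.2

lemma coefAux_eq (M t : ℕ) :
    coefAux M t = 1 - ∑ u ∈ Finset.range t, ((M + t).choose (t - u) : ℤ) * coefAux M u := by
  rw [coefAux, Finset.sum_attach (Finset.range t) (fun u => ((M + t).choose (t - u) : ℤ) * coefAux M u)]

lemma coefAux_identity (M t : ℕ) :
    ∑ u ∈ Finset.range (t + 1), ((M + t).choose (t - u) : ℤ) * coefAux M u = 1 := by
  rw [Finset.sum_range_succ, Nat.sub_self, Nat.choose_zero_right]
  rw [coefAux_eq M t]
  push_cast
  ring

lemma coefAux_identity' (M t : ℕ) :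
    ∑ j ∈ Finset.range (t + 1), ((M + t).choose j : ℤ) * coefAux M (t - j) = 1 := by
  rw [← coefAux_identity M t, ← Finset.sum_range_reflect]
  apply Finset.sum_congr rfl
  intro j hj
  rw [Finset.mem_range] at hj
  have h1 : t + 1 - 1 - j = t - j := by omega
  have h2 : t - (t - j) = j := by omega
  rw [h1, h2]

end Coef

section Key

variable {m d : ℕ}

/-- The coefficient attached to a set of size `s`. -/
def wcoef (m d s : ℕ) : ℤ := if s ≤ d then coefAux (m - d) (d - s) else 0

lemma key_identity (hdm : d ≤ m) (P : Finset (Fin m)) (hP : P.card ≤ d) :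
    ∑ S : Finset (Fin m), (if P ⊆ S then wcoef m d S.card else 0) = 1 := by
  classical
  rw [sum_supersets P (fun S => wcoef m d S.card)]
  have hcard : ∀ B ∈ Pᶜ.powerset, wcoef m d (P ∪ B).card = wcoef m d (P.card + B.card) := by
    intro B hB
    rw [Finset.mem_powerset] at hB
    congr 1
    rw [Finset.card_union_of_disjoint]
    refine Finset.disjoint_left.mpr ?_
    intro x hxP hxB
    exact Finset.mem_compl.mp (hB hxB) hxP
  rw [Finset.sum_congr rfl hcard, Finset.sum_powerset]
  have hPc : Pᶜ.card = m - P.card := by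
    rw [Finset.card_compl, Fintype.card_fin]
  have hstep : ∀ j ∈ Finset.range (Pᶜ.card + 1),
      ∑ B ∈ Finset.powersetCard j Pᶜ, wcoef m d (P.card + B.card)
        = ((m - P.card).choose j : ℤ) * wcoef m d (P.card + j) := by
    intro j hj
    have : ∀ B ∈ Finset.powersetCard j Pᶜ, wcoef m d (P.card + B.card)
        = wcoef m d (P.card + j) := by
      intro B hB
      rw [(Finset.mem_powersetCard.mp hB).2]
    rw [Finset.sum_congr rfl this, Finset.sum_const, ← hPc, Finset.card_powersetCard,
      nsmul_eq_mul]
  rw [Finset.sum_congr rfl hstep, hPc]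
  -- now a sum over j ∈ range (m - P.card + 1)
  set p := P.card with hp
  have htrunc : ∑ j ∈ Finset.range (m - p + 1), ((m - p).choose j : ℤ) * wcoef m d (p + j)
      = ∑ j ∈ Finset.range (d - p + 1), ((m - p).choose j : ℤ) * wcoef m d (p + j) := by
    symm
    apply Finset.sum_subset
    · intro j hj
      rw [Finset.mem_range] at hj ⊢
      omega
    · intro j _ hj
      rw [Finset.mem_range, not_lt] at hj
      have : ¬ (p + j ≤ d) := by omega
      rw [wcoef, if_neg this, mul_zero]
  rw [htrunc]
  have hmp : m - p = (m - d) + (d - p) := by omega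
  have : ∀ j ∈ Finset.range (d - p + 1), ((m - p).choose j : ℤ) * wcoef m d (p + j)
      = ((m - d + (d - p)).choose j : ℤ) * coefAux (m - d) (d - p - j) := by
    intro j hj
    rw [Finset.mem_range] at hj
    have h1 : p + j ≤ d := by omega
    have h2 : d - (p + j) = d - p - j := by omega
    rw [wcoef, if_pos h1, h2, hmp]
  rw [Finset.sum_congr rfl this]
  exact coefAux_identity' (m - d) (d - p)

end Key

section Decomp

variable {R : Type*} [CommRing R] {n k m d : ℕ}

/-- preimage of `S` under `u`, as a finset of `Fin n` -/
def preim (u : Fin n → Fin m) (S : Finset (Fin m)) : Finset (Fin n) :=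
  Finset.univ.filter (fun i => u i ∈ S)

lemma card_support_le (T : Fin n →₀ ℕ) : T.support.card ≤ T.sum fun _ e => e := by
  rw [Finsupp.sum, Finset.card_eq_sum_ones]
  apply Finset.sum_le_sum
  intro i hi
  exact Nat.one_le_iff_ne_zero.mpr (Finsupp.mem_support_iff.mp hi)

lemma decomp (hdm : d ≤ m) (u : Fin n → Fin m) (φ : PolyTuple R n k) (hφ : DegLE d φ) :
    φ = ∑ S : Finset (Fin m), (wcoef m d S.card) • prestrict (preim u S) φ := by
  funext j
  apply MvPolynomial.ext
  intro T
  rw [Finset.sum_apply]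
  rw [MvPolynomial.coeff_sum]
  have hterm : ∀ S : Finset (Fin m),
      MvPolynomial.coeff T ((wcoef m d S.card • prestrict (preim u S) φ) j)
        = (if T.support.image u ⊆ S then wcoef m d S.card else 0) • (φ j).coeff T := by
    intro S
    have happ : (wcoef m d S.card • prestrict (preim u S) φ) j
        = wcoef m d S.card • (prestrict (preim u S) φ j) := rfl
    rw [happ, MvPolynomial.coeff_smul, coeff_prestrict]
    have hiff : T.support ⊆ preim u S ↔ T.support.image u ⊆ S := by
      constructor
      · intro h x hx
        obtain ⟨i, hi, rfl⟩ := Finset.mem_image.mp hx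
        have := h hi
        rw [preim, Finset.mem_filter] at this
        exact this.2
      · intro h i hi
        rw [preim, Finset.mem_filter]
        exact ⟨Finset.mem_univ _, h (Finset.mem_image_of_mem u hi)⟩
    by_cases hsub : T.support.image u ⊆ S
    · rw [if_pos (hiff.mpr hsub), if_pos hsub]
    · rw [if_neg (fun h => hsub (hiff.mp h)), if_neg hsub, smul_zero, zero_smul]
  rw [Finset.sum_congr rfl (fun S _ => hterm S), ← Finset.sum_smul]
  by_cases hc : (φ j).coeff T = 0
  · rw [hc, smul_zero]
  · have hcard : (T.support.image u).card ≤ d := by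
      calc (T.support.image u).card ≤ T.support.card := Finset.card_image_le
        _ ≤ T.sum fun _ e => e := card_support_le T
        _ ≤ (φ j).totalDegree := MvPolynomial.le_totalDegree (MvPolynomial.mem_support_iff.mpr hc)
        _ ≤ d := hφ j
    rw [key_identity hdm _ hcard, one_smul]

end Decomp

section Counting

variable {n m : ℕ}

lemma card_fiber (S : Finset (Fin m)) (J : Finset (Fin n)) :
    (Finset.univ.filter fun u : Fin n → Fin m => preim u S = J).card
      = S.card ^ J.card * (m - S.card) ^ (n - J.card) := by
  classical
  have hset : (Finset.univ.filter fun u : Fin n → Fin m => preim u S = J)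
      = Fintype.piFinset (fun i => if i ∈ J then S else Sᶜ) := by
    ext u
    simp only [Finset.mem_filter, Finset.mem_univ, true_and, Fintype.mem_piFinset]
    constructor
    · intro h i
      split <;> rename_i hi
      · rw [← h, preim, Finset.mem_filter] at hi
        exact hi.2
      · rw [Finset.mem_compl]
        intro hui
        apply hi
        rw [← h, preim, Finset.mem_filter]
        exact ⟨Finset.mem_univ _, hui⟩
    · intro h
      ext i
      rw [preim, Finset.mem_filter]
      constructor
      · rintro ⟨-, hui⟩
        by_contra hiJ
        have := h i
        rw [if_neg hiJ, Finset.mem_compl] at this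
        exact this hui
      · intro hiJ
        refine ⟨Finset.mem_univ _, ?_⟩
        have := h i
        rwa [if_pos hiJ] at this
  rw [hset, Fintype.card_piFinset]
  rw [← Finset.prod_mul_prod_compl J]
  have h1 : ∏ i ∈ J, (if i ∈ J then S else Sᶜ).card = S.card ^ J.card := by
    rw [Finset.prod_congr rfl (fun i hi => by rw [if_pos hi]), Finset.prod_const]
  have h2 : ∏ i ∈ Jᶜ, (if i ∈ J then S else Sᶜ).card = (m - S.card) ^ (n - J.card) := by
    rw [Finset.prod_congr rfl (fun i hi => by rw [if_neg (Finset.mem_compl.mp hi)]),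
      Finset.prod_const, Finset.card_compl, Fintype.card_fin, Finset.card_compl,
      Fintype.card_fin]
  rw [h1, h2]

lemma sum_over_u (S : Finset (Fin m)) (F : Finset (Fin n) → ℝ) :
    ∑ u : Fin n → Fin m, F (preim u S)
      = ∑ J : Finset (Fin n),
          ((S.card ^ J.card * (m - S.card) ^ (n - J.card) : ℕ) : ℝ) * F J := by
  classical
  have h : ∀ u : Fin n → Fin m,
      F (preim u S) = ∑ J : Finset (Fin n), if preim u S = J then F J else 0 := by
    intro u
    rw [Finset.sum_ite_eq Finset.univ (preim u S) F, if_pos (Finset.mem_univ _)]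
  rw [Finset.sum_congr rfl (fun u _ => h u), Finset.sum_comm]
  apply Finset.sum_congr rfl
  intro J _
  rw [← Finset.sum_filter, Finset.sum_const, card_fiber, nsmul_eq_mul]

end Counting

section Coupling

variable {n : ℕ}

lemma coupling (τ ς : ℝ) (hτ : 0 ≤ τ) (hτσ : τ ≤ ς) (hς1 : ς ≤ 1)
    (g : Finset (Fin n) → ℝ) (hmono : ∀ A B : Finset (Fin n), A ⊆ B → g A ≤ g B) :
    ∑ A : Finset (Fin n), τ ^ A.card * (1 - τ) ^ (n - A.card) * g A
      ≤ ∑ J : Finset (Fin n), ς ^ J.card * (1 - ς) ^ (n - J.card) * g J := by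
  classical
  have hexp : ∀ J : Finset (Fin n), ς ^ J.card * (1 - ς) ^ (n - J.card) * g J
      = ∑ A ∈ J.powerset, τ ^ A.card * (ς - τ) ^ (J.card - A.card)
          * (1 - ς) ^ (n - J.card) * g J := by
    intro J
    have : ς ^ J.card = ∑ A ∈ J.powerset, τ ^ A.card * (ς - τ) ^ (J.card - A.card) := by
      rw [sum_subsets_pow J]
      congr 1
      ring
    rw [this, Finset.sum_mul, Finset.sum_mul]
  rw [Finset.sum_congr rfl (fun J _ => hexp J)]
  have hstep : ∑ A : Finset (Fin n), ∑ B ∈ Aᶜ.powerset,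
      τ ^ A.card * (ς - τ) ^ ((A ∪ B).card - A.card) * (1 - ς) ^ (n - (A ∪ B).card) * g A
      ≤ ∑ J : Finset (Fin n), ∑ A ∈ J.powerset,
      τ ^ A.card * (ς - τ) ^ (J.card - A.card) * (1 - ς) ^ (n - J.card) * g J := by
    rw [← sum_powerset_pairs (fun A J =>
      τ ^ A.card * (ς - τ) ^ (J.card - A.card) * (1 - ς) ^ (n - J.card) * g A)]
    apply Finset.sum_le_sum
    intro J _
    apply Finset.sum_le_sum
    intro A hA
    rw [Finset.mem_powerset] at hA
    have hw : 0 ≤ τ ^ A.card * (ς - τ) ^ (J.card - A.card) * (1 - ς) ^ (n - J.card) := by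
      apply mul_nonneg (mul_nonneg (pow_nonneg hτ _) (pow_nonneg (by linarith) _))
        (pow_nonneg (by linarith) _)
    exact mul_le_mul_of_nonneg_left (hmono A J hA) hw
  refine le_trans (le_of_eq ?_) hstep
  apply Finset.sum_congr rfl
  intro A _
  have hinner : ∀ B ∈ Aᶜ.powerset,
      τ ^ A.card * (ς - τ) ^ ((A ∪ B).card - A.card) * (1 - ς) ^ (n - (A ∪ B).card) * g A
        = τ ^ A.card * g A * ((ς - τ) ^ B.card * (1 - ς) ^ (Aᶜ.card - B.card)) := by
    intro B hB
    rw [Finset.mem_powerset] at hB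
    have hdisj : Disjoint A B := by
      refine Finset.disjoint_left.mpr ?_
      intro x hxA hxB
      exact Finset.mem_compl.mp (hB hxB) hxA
    have hcard : (A ∪ B).card = A.card + B.card := Finset.card_union_of_disjoint hdisj
    have h1 : (A ∪ B).card - A.card = B.card := by omega
    have h2 : n - (A ∪ B).card = Aᶜ.card - B.card := by
      rw [Finset.card_compl, Fintype.card_fin, hcard]
      omega
    rw [h1, h2]
    ring
  rw [Finset.sum_congr rfl hinner, ← Finset.mul_sum, sum_subsets_pow]
  have : ς - τ + (1 - ς) = 1 - τ := by ring
  rw [this, Finset.card_compl, Fintype.card_fin]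
  ring

end Coupling

/-- **Linear expectation lemma** (Lemma 3.2): for every `σ ∈ (0,1]` and `d ≥ 1` there is
`c(σ,d) > 0` such that for all positive integers `n, k`, every commutative ring `R` and every
symmetric, sub-additive, restriction-monotone rank function on `(R[x₁,…,x_n]_{≤d})^k`, for
any `φ ∈ (R[x₁,…,x_n]_{≤d})^k` the expected rank of the restriction of `φ` to a `σ`-random
subset `J ⊆ [n]` is at least `c(σ,d)·rank φ`. -/
theorem linear_expectation (σ : ℝ) (hσ0 : 0 < σ) (hσ1 : σ ≤ 1) (d : ℕ) (hd : 1 ≤ d) :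
    ∃ c : ℝ, 0 < c ∧
      ∀ (n k : ℕ), 0 < n → 0 < k →
        ∀ (R : Type) [CommRing R] (rank : PolyTuple R n k → ℝ),
          -- rank(0) = 0 and rank takes nonnegative values
          rank 0 = 0 →
          (∀ φ, DegLE d φ → 0 ≤ rank φ) →
          -- symmetry
          (∀ φ, DegLE d φ → rank (-φ) = rank φ) →
          -- sub-additivity
          (∀ φ γ : PolyTuple R n k, DegLE d φ → DegLE d γ →
            rank (φ + γ) ≤ rank φ + rank γ) →
          -- monotonicity under restrictions
          (∀ (φ : PolyTuple R n k) (I : Finset (Fin n)), DegLE d φ →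
            rank (prestrict I φ) ≤ rank φ) →
          ∀ φ : PolyTuple R n k, DegLE d φ →
            c * rank φ ≤
              ∑ J : Finset (Fin n),
                (σ ^ J.card * (1 - σ) ^ (n - J.card)) * rank (prestrict J φ) := by
  classical
  set m : ℕ := ⌈(d : ℝ) / σ⌉₊ with hm
  have hdm : d ≤ m := by
    have h1 : (d : ℝ) ≤ (d : ℝ) / σ := by
      have hd' : (1 : ℝ) ≤ (d : ℝ) := by exact_mod_cast hd
      rw [le_div_iff₀ hσ0]
      nlinarith
    have h2 : ((d : ℕ) : ℝ) ≤ (m : ℝ) := le_trans h1 (Nat.le_ceil _)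
    exact_mod_cast h2
  have hm1 : 1 ≤ m := le_trans hd hdm
  have hdσm : (d : ℝ) ≤ σ * m := by
    have h1 : (d : ℝ) / σ ≤ m := Nat.le_ceil _
    rw [div_le_iff₀ hσ0] at h1
    linarith
  set W : ℝ := ∑ S : Finset (Fin m), (((wcoef m d S.card).natAbs : ℕ) : ℝ) with hW
  have hW0 : 0 ≤ W := Finset.sum_nonneg fun S _ => Nat.cast_nonneg _
  refine ⟨1 / (1 + W), by positivity, ?_⟩
  intro n k hn hk R _ rank h0 hnn hsym hadd hmono φ hφ
  set E : ℝ := ∑ J : Finset (Fin n),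
      (σ ^ J.card * (1 - σ) ^ (n - J.card)) * rank (prestrict J φ) with hE
  -- E is nonnegative
  have hE0 : 0 ≤ E := by
    apply Finset.sum_nonneg
    intro J _
    apply mul_nonneg
    · apply mul_nonneg (pow_nonneg (le_of_lt hσ0) _) (pow_nonneg (by linarith) _)
    · exact hnn _ (degLE_prestrict J hφ)
  -- the monotone function g
  have hgmono : ∀ A B : Finset (Fin n), A ⊆ B →
      rank (prestrict A φ) ≤ rank (prestrict B φ) := by
    intro A B hAB
    rw [← prestrict_prestrict hAB φ]
    exact hmono _ A (degLE_prestrict B hφ)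
  -- Step A: for each u, rank φ ≤ ∑_S |w_S| rank (prestrict (preim u S) φ)
  have stepA : ∀ u : Fin n → Fin m,
      rank φ ≤ ∑ S : Finset (Fin m),
        (((wcoef m d S.card).natAbs : ℕ) : ℝ) * rank (prestrict (preim u S) φ) := by
    intro u
    have hdec := decomp hdm u φ hφ
    calc rank φ = rank (∑ S : Finset (Fin m),
          wcoef m d S.card • prestrict (preim u S) φ) := by rw [← hdec]
      _ ≤ ∑ S : Finset (Fin m), rank (wcoef m d S.card • prestrict (preim u S) φ) :=
          rank_sum_le rank h0 hadd _ _
            (fun S _ => degLE_zsmul (degLE_prestrict _ hφ) _)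
      _ ≤ ∑ S : Finset (Fin m),
          (((wcoef m d S.card).natAbs : ℕ) : ℝ) * rank (prestrict (preim u S) φ) := by
          apply Finset.sum_le_sum
          intro S _
          exact rank_zsmul_le rank h0 hsym hadd (degLE_prestrict _ hφ) _
  -- Step C: for each S, the u-average equals the τ_S-biased expectation
  have stepC : ∀ S : Finset (Fin m),
      ∑ u : Fin n → Fin m, rank (prestrict (preim u S) φ)
        = (m : ℝ) ^ n * ∑ J : Finset (Fin n),
            ((S.card : ℝ) / m) ^ J.card * (1 - (S.card : ℝ) / m) ^ (n - J.card)
              * rank (prestrict J φ) := by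
    intro S
    rw [sum_over_u S (fun J => rank (prestrict J φ)), Finset.mul_sum]
    apply Finset.sum_congr rfl
    intro J _
    have hSm : S.card ≤ m := by simpa using Finset.card_le_univ S
    have hJn : J.card ≤ n := by simpa using Finset.card_le_univ J
    have hmpos : (0 : ℝ) < m := by exact_mod_cast hm1
    have hcast : ((S.card ^ J.card * (m - S.card) ^ (n - J.card) : ℕ) : ℝ)
        = (S.card : ℝ) ^ J.card * ((m : ℝ) - S.card) ^ (n - J.card) := by
      push_cast [Nat.cast_sub hSm]
      ring
    rw [hcast]
    have hsplit : (m : ℝ) ^ n = (m : ℝ) ^ J.card * (m : ℝ) ^ (n - J.card) := by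
      rw [← pow_add]
      congr 1
      omega
    have h1 : (S.card : ℝ) ^ J.card = (m : ℝ) ^ J.card * ((S.card : ℝ) / m) ^ J.card := by
      rw [div_pow, mul_div_cancel₀]
      exact pow_ne_zero _ (ne_of_gt hmpos)
    have h2 : ((m : ℝ) - S.card) ^ (n - J.card)
        = (m : ℝ) ^ (n - J.card) * (1 - (S.card : ℝ) / m) ^ (n - J.card) := by
      rw [← mul_pow]
      congr 1
      field_simp
    rw [h1, h2, hsplit]
    ring
  -- Step D: coupling for each S with |S| ≤ d (otherwise coefficient is 0)
  have stepD : ∀ S : Finset (Fin m),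
      (((wcoef m d S.card).natAbs : ℕ) : ℝ) * ∑ J : Finset (Fin n),
          ((S.card : ℝ) / m) ^ J.card * (1 - (S.card : ℝ) / m) ^ (n - J.card)
            * rank (prestrict J φ)
        ≤ (((wcoef m d S.card).natAbs : ℕ) : ℝ) * E := by
    intro S
    by_cases hSd : S.card ≤ d
    · apply mul_le_mul_of_nonneg_left _ (Nat.cast_nonneg _)
      have hmpos : (0 : ℝ) < m := by exact_mod_cast hm1
      have hτ0 : (0 : ℝ) ≤ (S.card : ℝ) / m := by positivity
      have hτσ : (S.card : ℝ) / m ≤ σ := by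
        rw [div_le_iff₀ hmpos]
        calc (S.card : ℝ) ≤ (d : ℝ) := by exact_mod_cast hSd
          _ ≤ σ * m := hdσm
      have := coupling ((S.card : ℝ) / m) σ hτ0 hτσ hσ1
        (fun J => rank (prestrict J φ)) hgmono
      calc ∑ J : Finset (Fin n), ((S.card : ℝ) / m) ^ J.card
            * (1 - (S.card : ℝ) / m) ^ (n - J.card) * rank (prestrict J φ)
          ≤ ∑ J : Finset (Fin n), σ ^ J.card * (1 - σ) ^ (n - J.card)
            * rank (prestrict J φ) := this
        _ = E := by rw [hE]
    · rw [wcoef, if_neg hSd]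
      simp
  -- combine: m^n * rank φ ≤ m^n * W * E
  have hcomb : (m : ℝ) ^ n * rank φ ≤ (m : ℝ) ^ n * (W * E) := by
    have hcount : ((Finset.univ : Finset (Fin n → Fin m)).card : ℝ) = (m : ℝ) ^ n := by
      rw [Finset.card_univ, Fintype.card_fun, Fintype.card_fin, Fintype.card_fin]
      push_cast
      ring
    calc (m : ℝ) ^ n * rank φ
        = ∑ _u : Fin n → Fin m, rank φ := by
          rw [Finset.sum_const, nsmul_eq_mul, hcount]
      _ ≤ ∑ u : Fin n → Fin m, ∑ S : Finset (Fin m),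
            (((wcoef m d S.card).natAbs : ℕ) : ℝ) * rank (prestrict (preim u S) φ) :=
          Finset.sum_le_sum fun u _ => stepA u
      _ = ∑ S : Finset (Fin m), (((wcoef m d S.card).natAbs : ℕ) : ℝ)
            * ∑ u : Fin n → Fin m, rank (prestrict (preim u S) φ) := by
          rw [Finset.sum_comm]
          exact Finset.sum_congr rfl fun S _ => by rw [Finset.mul_sum]
      _ = ∑ S : Finset (Fin m), (m : ℝ) ^ n * ((((wcoef m d S.card).natAbs : ℕ) : ℝ)
            * ∑ J : Finset (Fin n), ((S.card : ℝ) / m) ^ J.card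
              * (1 - (S.card : ℝ) / m) ^ (n - J.card) * rank (prestrict J φ)) := by
          apply Finset.sum_congr rfl
          intro S _
          rw [stepC S]
          ring
      _ ≤ ∑ S : Finset (Fin m), (m : ℝ) ^ n
            * ((((wcoef m d S.card).natAbs : ℕ) : ℝ) * E) := by
          apply Finset.sum_le_sum
          intro S _
          have hmpos : (0 : ℝ) ≤ (m : ℝ) ^ n := by positivity
          exact mul_le_mul_of_nonneg_left (stepD S) hmpos
      _ = (m : ℝ) ^ n * (W * E) := by
          rw [← Finset.mul_sum, ← Finset.sum_mul]
  have hmn : (0 : ℝ) < (m : ℝ) ^ n := by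
    have : (0 : ℝ) < m := by exact_mod_cast hm1
    positivity
  have hrankE : rank φ ≤ W * E := le_of_mul_le_mul_left hcomb hmn
  have hfin : rank φ ≤ (1 + W) * E := by nlinarith
  rw [div_mul_eq_mul_div, div_le_iff₀ (by positivity : (0:ℝ) < 1 + W)]
  calc 1 * rank φ = rank φ := one_mul _
    _ ≤ (1 + W) * E := hfin
    _ = E * (1 + W) := mul_comm _ _
end

section
/- Let σ > 0 with 1.01σ ≤ 1, let n ∈ ℕ, and let g : {0,1}^n → {0,1} be a monotone Boolean function. Then there exists q ∈ [σ, 1.01σ] such that the total influence of g under π_q^n satisfies I^{(q)}(g) ≤ 100/σ. -/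
/-- The total influence `I^{(q)}(g) = Σᵢ E_{x∼π_q^n} |g(x) − g(xⁱ)|` of a Boolean function
`g : {0,1}^n → {0,1}` under the product distribution `π_q^n`, where `xⁱ` differs from `x`
only in the `i`-th coordinate. -/
noncomputable def totalInfluence (n : ℕ) (q : ℝ) (g : (Fin n → Bool) → Bool) : ℝ :=
  ∑ i : Fin n, ∑ x : Fin n → Bool,
    cubeWeight n q x *
      |(if g x then (1 : ℝ) else 0) -
        (if g (Function.update x i (!x i)) then (1 : ℝ) else 0)|

open Finset

private lemma sum_cubeWeight (n : ℕ) (q : ℝ) :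
    ∑ x : Fin n → Bool, cubeWeight n q x = 1 := by
  unfold cubeWeight
  rw [← Fintype.piFinset_univ,
    ← Finset.prod_univ_sum (fun _ : Fin n => (univ : Finset Bool))
      (fun _ b => if b then q else 1 - q)]
  simp

private lemma cubeWeight_hasDerivAt (n : ℕ) (x : Fin n → Bool) (q : ℝ) :
    HasDerivAt (fun q : ℝ => cubeWeight n q x)
      (∑ i, (∏ j ∈ Finset.univ.erase i, (if x j then q else 1 - q)) *
        (if x i then (1:ℝ) else -1)) q := by
  have h : ∀ i ∈ Finset.univ, HasDerivAt (fun q : ℝ => if x i then q else 1 - q)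
      (if x i then (1:ℝ) else -1) q := by
    intro i _
    by_cases h : x i
    · simp only [h, if_true]; exact hasDerivAt_id' q
    · simpa [h] using (hasDerivAt_id q).const_sub 1
  simpa [cubeWeight, smul_eq_mul] using HasDerivAt.fun_finsetProd h

private lemma influence_term (n : ℕ) (g : (Fin n → Bool) → Bool)
    (hmono : ∀ x y : Fin n → Bool, (∀ i, x i = true → y i = true) → g x = true → g y = true)
    (q : ℝ) (i : Fin n) :
    ∑ x : Fin n → Bool, (if g x then (1:ℝ) else 0) *
      ((∏ j ∈ Finset.univ.erase i, (if x j then q else 1 - q)) * (if x i then (1:ℝ) else -1))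
    = ∑ x : Fin n → Bool, cubeWeight n q x *
      |(if g x then (1:ℝ) else 0) - (if g (Function.update x i (!x i)) then (1:ℝ) else 0)| := by
  set f : (Fin n → Bool) → ℝ := fun x => if g x then (1:ℝ) else 0 with hf
  set e : (Fin n → Bool) → (Fin n → Bool) := fun x => Function.update x i (!x i) with he
  set W : (Fin n → Bool) → ℝ := fun x => ∏ j ∈ Finset.univ.erase i, (if x j then q else 1 - q) with hWdef
  set s : (Fin n → Bool) → ℝ := fun x => if x i then (1:ℝ) else -1 with hs
  have hinv : Function.Involutive e := by
    intro x
    simp [he, Function.update_idem, Function.update_eq_self]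
  have hsum : ∀ G : (Fin n → Bool) → ℝ, ∑ x, G x = ∑ x, G (e x) := by
    intro G
    rw [← Equiv.sum_comp (hinv.toPerm e) G]
    simp [Function.Involutive.coe_toPerm]
  have hW : ∀ x, W (e x) = W x := by
    intro x
    refine Finset.prod_congr rfl fun j hj => ?_
    simp only [he, Function.update_of_ne (Finset.ne_of_mem_erase hj)]
  have hse : ∀ x, s (e x) = - s x := by
    intro x
    simp only [hs, he, Function.update_self]
    by_cases h : x i <;> simp [h]
  have hcw : ∀ x : Fin n → Bool, cubeWeight n q x = (if x i then q else 1 - q) * W x := by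
    intro x
    rw [cubeWeight, ← Finset.mul_prod_erase _ _ (Finset.mem_univ i)]
  -- pointwise monotonicity key
  have key : ∀ x, (f x - f (e x)) * s x = |f x - f (e x)| := by
    intro x
    by_cases h : x i
    · have hle : f (e x) ≤ f x := by
        by_cases hg : g (e x)
        · have : g x = true := by
            refine hmono (e x) x (fun j hj => ?_) hg
            by_cases hji : j = i
            · subst hji; simp [he, h] at hj
            · simp only [he, Function.update_of_ne hji] at hj; exact hj
          simp [hf, hg, this]
        · simp only [hf, hg, if_false]
          by_cases hx : g x <;> simp [hx]
      have hsx : s x = 1 := by simp [hs, h]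
      rw [hsx, mul_one, abs_of_nonneg (by linarith)]
    · have hle : f x ≤ f (e x) := by
        by_cases hg : g x
        · have : g (e x) = true := by
            refine hmono x (e x) (fun j hj => ?_) hg
            by_cases hji : j = i
            · subst hji; simp [he, h]
            · simp only [he, Function.update_of_ne hji]; exact hj
          simp [hf, hg, this]
        · simp only [hf, hg, if_false]
          by_cases hx : g (e x) <;> simp [hx]
      have hsx : s x = -1 := by simp [hs, h]
      rw [hsx, abs_sub_comm, abs_of_nonneg (by linarith)]
      ring
  -- double both sides
  have hL : 2 * (∑ x, f x * (W x * s x)) = ∑ x, (f x - f (e x)) * s x * W x := by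
    have h1 : ∑ x, f x * (W x * s x) = ∑ x, f (e x) * (W x * (- s x)) := by
      rw [hsum fun x => f x * (W x * s x)]
      exact Finset.sum_congr rfl fun x _ => by rw [hW, hse]
    calc 2 * (∑ x, f x * (W x * s x))
        = (∑ x, f x * (W x * s x)) + ∑ x, f (e x) * (W x * (- s x)) := by rw [← h1]; ring
      _ = ∑ x, (f x - f (e x)) * s x * W x := by
          rw [← Finset.sum_add_distrib]
          exact Finset.sum_congr rfl fun x _ => by ring
  have hR : 2 * (∑ x, cubeWeight n q x * |f x - f (e x)|) = ∑ x, W x * |f x - f (e x)| := by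
    have h1 : ∑ x, cubeWeight n q x * |f x - f (e x)|
        = ∑ x, cubeWeight n q (e x) * |f x - f (e x)| := by
      rw [hsum fun x => cubeWeight n q x * |f x - f (e x)|]
      refine Finset.sum_congr rfl fun x _ => ?_
      rw [hinv x, abs_sub_comm]
    calc 2 * (∑ x, cubeWeight n q x * |f x - f (e x)|)
        = (∑ x, cubeWeight n q x * |f x - f (e x)|)
          + ∑ x, cubeWeight n q (e x) * |f x - f (e x)| := by rw [← h1]; ring
      _ = ∑ x, W x * |f x - f (e x)| := by
          rw [← Finset.sum_add_distrib]
          refine Finset.sum_congr rfl fun x _ => ?_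
          rw [hcw x, hcw (e x), hW]
          have : (e x) i = !x i := by simp [he]
          rw [this]
          by_cases h : x i <;> simp [h] <;> ring
  have hfin : ∑ x, (f x - f (e x)) * s x * W x = ∑ x, W x * |f x - f (e x)| :=
    Finset.sum_congr rfl fun x _ => by rw [key]; ring
  have : 2 * (∑ x, f x * (W x * s x)) = 2 * (∑ x, cubeWeight n q x * |f x - f (e x)|) := by
    rw [hL, hR, hfin]
  linarith

private lemma F_hasDerivAt (n : ℕ) (g : (Fin n → Bool) → Bool)
    (hmono : ∀ x y : Fin n → Bool, (∀ i, x i = true → y i = true) → g x = true → g y = true)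
    (q : ℝ) :
    HasDerivAt (fun q : ℝ => ∑ x : Fin n → Bool, (if g x then (1:ℝ) else 0) * cubeWeight n q x)
      (totalInfluence n q g) q := by
  have hterm : ∀ x : Fin n → Bool,
      HasDerivAt (fun q : ℝ => (if g x then (1:ℝ) else 0) * cubeWeight n q x)
        ((if g x then (1:ℝ) else 0) *
          ∑ i, (∏ j ∈ Finset.univ.erase i, (if x j then q else 1 - q)) *
            (if x i then (1:ℝ) else -1)) q :=
    fun x => (cubeWeight_hasDerivAt n x q).const_mul _
  have hsum := HasDerivAt.fun_sum (fun x (_ : x ∈ (univ : Finset (Fin n → Bool))) => hterm x)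
  convert hsum using 1
  · rfl
  · rfl
  calc totalInfluence n q g
      = ∑ i : Fin n, ∑ x : Fin n → Bool, (if g x then (1:ℝ) else 0) *
          ((∏ j ∈ Finset.univ.erase i, (if x j then q else 1 - q)) *
            (if x i then (1:ℝ) else -1)) := by
        rw [totalInfluence]
        exact Finset.sum_congr rfl fun i _ => (influence_term n g hmono q i).symm
    _ = ∑ x : Fin n → Bool, ∑ i : Fin n, (if g x then (1:ℝ) else 0) *
          ((∏ j ∈ Finset.univ.erase i, (if x j then q else 1 - q)) *
            (if x i then (1:ℝ) else -1)) := Finset.sum_comm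
    _ = _ := by
        exact Finset.sum_congr rfl fun x _ => (Finset.mul_sum _ _ _).symm

/-- **Existence of a sparse level for the influence** (a step in the proof of Lemma 3.3):
for `σ > 0` with `1.01σ ≤ 1` and any monotone Boolean function `g : {0,1}^n → {0,1}`,
there exists `q ∈ [σ, 1.01σ]` with total influence `I^{(q)}(g) ≤ 100/σ`. -/
theorem exists_small_influence (σ : ℝ) (hσ0 : 0 < σ) (hσ1 : 1.01 * σ ≤ 1)
    (n : ℕ) (g : (Fin n → Bool) → Bool)
    (hmono : ∀ x y : Fin n → Bool, (∀ i, x i = true → y i = true) →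
      g x = true → g y = true) :
    ∃ q : ℝ, σ ≤ q ∧ q ≤ 1.01 * σ ∧ totalInfluence n q g ≤ 100 / σ := by
  set F : ℝ → ℝ := fun q => ∑ x : Fin n → Bool, (if g x then (1:ℝ) else 0) * cubeWeight n q x
    with hF
  have hab : σ < 1.01 * σ := by nlinarith
  have hder : ∀ q : ℝ, HasDerivAt F (totalInfluence n q g) q :=
    fun q => F_hasDerivAt n g hmono q
  obtain ⟨c, hc, hceq⟩ := exists_hasDerivAt_eq_slope F (fun q => totalInfluence n q g) hab
    (fun x _ => (hder x).continuousAt.continuousWithinAt) (fun x hx => hder x)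
  refine ⟨c, le_of_lt hc.1, le_of_lt hc.2, ?_⟩
  have hw : ∀ q : ℝ, 0 ≤ q → q ≤ 1 → ∀ x : Fin n → Bool, 0 ≤ cubeWeight n q x := by
    intro q h0 h1 x
    refine Finset.prod_nonneg fun i _ => ?_
    by_cases h : x i <;> simp [h] <;> linarith
  have hσle : σ ≤ 1 := by nlinarith
  have hb0 : (0:ℝ) ≤ 1.01 * σ := by nlinarith
  have hF0 : 0 ≤ F σ := by
    refine Finset.sum_nonneg fun x _ => ?_
    have := hw σ hσ0.le hσle x
    by_cases h : g x <;> simp [h] <;> linarith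
  have hF1 : F (1.01 * σ) ≤ 1 := by
    calc F (1.01 * σ) ≤ ∑ x : Fin n → Bool, cubeWeight n (1.01 * σ) x := by
          refine Finset.sum_le_sum fun x _ => ?_
          have := hw (1.01 * σ) hb0 hσ1 x
          by_cases h : g x <;> simp [h] <;> linarith
      _ = 1 := sum_cubeWeight n (1.01 * σ)
  rw [hceq, div_le_div_iff₀ (by nlinarith) hσ0]
  nlinarith
end
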